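/- arXiv:2203.09971 — 6 statements merged into one kernel-verified Lean document; each statement's English description precedes it below -/
import Mathlib

section
/- No truthful budget aggregation mechanism can achieve ℓ1-loss less than 1/2: for every m ≥ 2 and every truthful mechanism f : D(m)^2 → D(m) for 2 voters over m projects, there exists a preference profile V with ℓ(V) ≥ 1/2. -/
open Finset

/-- A division among `m` projects: coordinates in `[0,1]` summing to `1`. -/
def IsDivision {m : ℕ} (x : Fin m → ℝ) : Prop :=
  (∀ j, 0 ≤ x j ∧ x j ≤ 1) ∧ ∑ j, x j = 1

/-- The ℓ1 distance between two vectors over `Fin m`. -/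
noncomputable def l1 {m : ℕ} (x y : Fin m → ℝ) : ℝ := ∑ j, |x j - y j|

/-- The proportional division (coordinatewise mean) of a profile. -/
noncomputable def propDiv {n m : ℕ} (V : Fin n → Fin m → ℝ) : Fin m → ℝ :=
  fun j => (∑ i, V i j) / (n : ℝ)

/-- The `(k+1)`-th smallest element of a multiset of reals. -/
noncomputable def medianAt (s : Multiset ℝ) (k : ℕ) : ℝ :=
  (s.sort (· ≤ ·)).getD k 0

/-- Voter reports on project `j` together with the `n+1` phantom values `p 0, …, p n`. -/
noncomputable def projValues {n m : ℕ} (V : Fin n → Fin m → ℝ)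
    (p : ℕ → ℝ) (j : Fin m) : Multiset ℝ :=
  (Multiset.map (fun i => V i j) Finset.univ.val) +
    (Multiset.map p (Finset.range (n + 1)).val)

/-- The median (the `(n+1)`-th smallest of the `2n+1` values) of the `n` voter reports
on project `j` together with the `n+1` phantom values. -/
noncomputable def phantomMedian {n m : ℕ} (V : Fin n → Fin m → ℝ)
    (p : ℕ → ℝ) (j : Fin m) : ℝ :=
  medianAt (projValues V p j) n

/-- A phantom system for `n` voters: continuous, weakly increasing functions
`y k : [0,1] → [0,1]`, `k = 0, …, n`, with `y k 0 = 0`, `y k 1 = 1`,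
pointwise ordered in `k`. -/
structure PhantomSystem (n : ℕ) where
  y : ℕ → ℝ → ℝ
  contOn : ∀ k ≤ n, ContinuousOn (y k) (Set.Icc 0 1)
  monoOn : ∀ k ≤ n, MonotoneOn (y k) (Set.Icc 0 1)
  mem_Icc : ∀ k ≤ n, ∀ t ∈ Set.Icc (0:ℝ) 1, y k t ∈ Set.Icc (0:ℝ) 1
  map_zero : ∀ k ≤ n, y k 0 = 0
  map_one : ∀ k ≤ n, y k 1 = 1
  mono_idx : ∀ t ∈ Set.Icc (0:ℝ) 1, ∀ k k', k ≤ k' → k' ≤ n → y k t ≤ y k' t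

/-- `f` is the moving phantom mechanism associated with the phantom system `Y`:
on each profile of divisions, for some `t*` making the medians sum to `1`,
it outputs on each project the median of the voter reports and the phantom values. -/
def IsMovingPhantom {n m : ℕ} (f : (Fin n → Fin m → ℝ) → (Fin m → ℝ))
    (Y : PhantomSystem n) : Prop :=
  ∀ V : Fin n → Fin m → ℝ, (∀ i, IsDivision (V i)) →
    ∃ t ∈ Set.Icc (0:ℝ) 1,
      (∑ j, phantomMedian V (fun k => Y.y k t) j) = 1 ∧
      ∀ j, f V j = phantomMedian V (fun k => Y.y k t) j

/-- Truthfulness of a budget aggregation mechanism: no voter `i` with true peak `V i`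
can get an outcome closer (in ℓ1 distance) to her peak by reporting some division `v`
instead of `V i`. -/
def Truthful {n m : ℕ} (f : (Fin n → Fin m → ℝ) → (Fin m → ℝ)) : Prop :=
  ∀ V : Fin n → Fin m → ℝ, (∀ i, IsDivision (V i)) →
    ∀ i : Fin n, ∀ v : Fin m → ℝ, IsDivision v →
      l1 (f V) (V i) ≤ l1 (f (Function.update V i v)) (V i)

/-- The ℓ1-loss of mechanism `f` on profile `V`. -/
noncomputable def loss {n m : ℕ} (f : (Fin n → Fin m → ℝ) → (Fin m → ℝ))
    (V : Fin n → Fin m → ℝ) : ℝ :=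
  l1 (f V) (propDiv V)

/-- The phantom system of the Piecewise Uniform mechanism for `n` voters. -/
noncomputable def puPhantom (n : ℕ) (k : ℕ) (t : ℝ) : ℝ :=
  if t < 1 / 2 then
    (if (k : ℝ) / (n : ℝ) < 1 / 2 then 0 else 4 * t * (k : ℝ) / (n : ℝ) - 2 * t)
  else
    (if (k : ℝ) / (n : ℝ) < 1 / 2 then (k : ℝ) * (2 * t - 1) / (n : ℝ)
     else (k : ℝ) * (3 - 2 * t) / (n : ℝ) - 2 + 2 * t)

/-- `w` is an output of the Piecewise Uniform mechanism on profile `V`. -/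
def IsPUOutcome {n m : ℕ} (V : Fin n → Fin m → ℝ) (w : Fin m → ℝ) : Prop :=
  ∃ t ∈ Set.Icc (0:ℝ) 1,
    (∑ j, phantomMedian V (fun k => puPhantom n k t) j) = 1 ∧
    ∀ j, w j = phantomMedian V (fun k => puPhantom n k t) j

/-- `w` is an output of the Independent Markets mechanism (phantoms `min (k·t) 1`)
on profile `V`. -/
def IsIMOutcome {n m : ℕ} (V : Fin n → Fin m → ℝ) (w : Fin m → ℝ) : Prop :=
  ∃ t : ℝ, 0 ≤ t ∧
    (∑ j, phantomMedian V (fun k => min ((k : ℝ) * t) 1) j) = 1 ∧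
    ∀ j, w j = phantomMedian V (fun k => min ((k : ℝ) * t) 1) j

/-- A single-minded division: it assigns the whole budget to one project. -/
def SingleMindedDiv {m : ℕ} (v : Fin m → ℝ) : Prop := ∃ j, v j = 1

/-- A double-minded division relative to an outcome `w` (three projects): it agrees with
`w` on one project `j`, proposes `1 - w j` on another project, and `0` on the third. -/
def DoubleMindedDiv (w v : Fin 3 → ℝ) : Prop :=
  ∃ j j' : Fin 3, j ≠ j' ∧ v j = w j ∧ v j' = 1 - w j ∧
    ∀ k, k ≠ j → k ≠ j' → v k = 0

/-- A three-type profile for mechanism `f`: each voter is fully-satisfied,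
double-minded, or single-minded. -/
def ThreeTypeProfile {n : ℕ} (f : (Fin n → Fin 3 → ℝ) → (Fin 3 → ℝ))
    (V : Fin n → Fin 3 → ℝ) : Prop :=
  ∀ i, V i = f V ∨ DoubleMindedDiv (f V) (V i) ∨ SingleMindedDiv (V i)

/-- The single-minded division fully supporting project `j`. -/
noncomputable def singleDiv (j : Fin 3) : Fin 3 → ℝ :=
  fun j' => if j' = j then 1 else 0

/-- The double-minded division proposing `x k` on project `k`, `1 - x k` on
project `j` and `0` on the remaining project. -/
noncomputable def doubleDiv (x : Fin 3 → ℝ) (k j : Fin 3) : Fin 3 → ℝ :=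
  fun j' => if j' = k then x k else if j' = j then 1 - x k else 0

/-- A utilitarian mechanism: it always returns a division minimizing the total
ℓ1 distance (social cost) to the voters' proposals. -/
def Utilitarian {n m : ℕ} (f : (Fin n → Fin m → ℝ) → (Fin m → ℝ)) : Prop :=
  ∀ V : Fin n → Fin m → ℝ, (∀ i, IsDivision (V i)) →
    IsDivision (f V) ∧
    ∀ x : Fin m → ℝ, IsDivision x → (∑ i, l1 (V i) (f V)) ≤ ∑ i, l1 (V i) x


lemma isDivision_indicator' {m : ℕ} (j0 : Fin m) :
    IsDivision (fun j => if j = j0 then (1:ℝ) else 0) := by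
  constructor
  · intro j; by_cases h : j = j0 <;> simp [h]
  · simp

lemma sum_abs_sub_indicator {m : ℕ} (j0 : Fin m) (a e : Fin m → ℝ)
    (he : ∀ j, e j = if j = j0 then (1:ℝ) else 0)
    (h0 : ∀ j, 0 ≤ a j ∧ a j ≤ 1) (h1 : ∑ j, a j = 1) :
    ∑ j, |a j - e j| = 2 * (1 - a j0) := by
  rw [← Finset.add_sum_erase Finset.univ (fun j => |a j - e j|) (Finset.mem_univ j0)]
  have h2 : ∑ j ∈ Finset.univ.erase j0, |a j - e j|
      = ∑ j ∈ Finset.univ.erase j0, a j := by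
    apply Finset.sum_congr rfl
    intro j hj
    rw [Finset.mem_erase] at hj
    rw [he j, if_neg hj.1, sub_zero, abs_of_nonneg (h0 j).1]
  have h3 : a j0 + ∑ j ∈ Finset.univ.erase j0, a j = 1 := by
    rw [Finset.add_sum_erase Finset.univ a (Finset.mem_univ j0)]; exact h1
  rw [h2, he j0, if_pos rfl, abs_of_nonpos (by linarith [(h0 j0).2])]
  linarith

lemma fV_eq_peak {m : ℕ} (f : (Fin 2 → Fin m → ℝ) → (Fin m → ℝ))
    (htruth : Truthful f) (V : Fin 2 → Fin m → ℝ) (hV : ∀ i, IsDivision (V i))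
    (i : Fin 2) (v : Fin m → ℝ) (hv : IsDivision v)
    (heq : f (Function.update V i v) = V i) : f V = V i := by
  have h := htruth V hV i v hv
  rw [heq] at h
  have hz : l1 (V i) (V i) = 0 := by simp [l1]
  rw [hz] at h
  have hnn : ∀ j ∈ Finset.univ, (0:ℝ) ≤ |f V j - V i j| := fun j _ => abs_nonneg _
  have h0 : l1 (f V) (V i) = 0 := le_antisymm h (Finset.sum_nonneg hnn)
  funext j
  have h1 := (Finset.sum_eq_zero_iff_of_nonneg hnn).mp h0 j (Finset.mem_univ j)
  have h2 := abs_eq_zero.mp h1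
  linarith

/-- No truthful mechanism achieves ℓ1-loss below `1/2`: for every
`m ≥ 2` and every truthful mechanism for 2 voters over `m` projects, there is a
profile with loss at least `1/2`. -/
theorem truthful_lower_bound {m : ℕ} (hm : 2 ≤ m)
    (f : (Fin 2 → Fin m → ℝ) → (Fin m → ℝ))
    (hdiv : ∀ V : Fin 2 → Fin m → ℝ, (∀ i, IsDivision (V i)) → IsDivision (f V))
    (htruth : Truthful f) :
    ∃ V : Fin 2 → Fin m → ℝ, (∀ i, IsDivision (V i)) ∧
      1 / 2 ≤ l1 (f V) (propDiv V) := by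
  have h01 : (⟨0, by omega⟩ : Fin m) ≠ ⟨1, by omega⟩ := by simp [Fin.ext_iff]
  set z0 : Fin m := ⟨0, by omega⟩
  set z1 : Fin m := ⟨1, by omega⟩
  set e0 : Fin m → ℝ := fun j => if j = z0 then 1 else 0 with he0
  set e1 : Fin m → ℝ := fun j => if j = z1 then 1 else 0 with he1
  have he0' : ∀ j, e0 j = if j = z0 then (1:ℝ) else 0 := fun j => rfl
  have he1' : ∀ j, e1 j = if j = z1 then (1:ℝ) else 0 := fun j => rfl
  have hd0 : IsDivision e0 := isDivision_indicator' z0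
  have hd1 : IsDivision e1 := isDivision_indicator' z1
  have hA : ∀ i : Fin 2, IsDivision (![e0, e1] i) := by
    intro i; fin_cases i <;> simpa
  set a := f ![e0, e1] with haeq
  have ha : IsDivision a := hdiv _ hA
  have hsum : a z0 + a z1 ≤ 1 := by
    have h2 : a z0 + a z1 ≤ ∑ j, a j := by
      rw [show a z0 + a z1 = ∑ j ∈ ({z0, z1} : Finset (Fin m)), a j from
        (Finset.sum_pair h01).symm]
      exact Finset.sum_le_sum_of_subset_of_nonneg (Finset.subset_univ _)
        (fun j _ _ => (ha.1 j).1)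
    linarith [ha.2]
  by_cases hc : a z0 ≤ 1/2
  · -- profile (e0, a): voter 1's true peak is a; reporting e1 yields exactly a
    refine ⟨![e0, a], by intro i; fin_cases i <;> simpa, ?_⟩
    have hupd : Function.update ![e0, a] 1 e1 = ![e0, e1] := by
      funext i; fin_cases i <;> simp
    have hfV : f ![e0, a] = a := by
      have : f ![e0, a] = ![e0, a] 1 := by
        apply fV_eq_peak f htruth _ (by intro i; fin_cases i <;> simpa) 1 e1 hd1
        rw [hupd]; simp; exact haeq.symm
      simpa using this
    rw [hfV]
    have hl : l1 a (propDiv ![e0, a]) = (∑ j, |a j - e0 j|) / 2 := by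
      unfold l1 propDiv
      rw [Finset.sum_div]
      apply Finset.sum_congr rfl
      intro j _
      rw [Fin.sum_univ_two]
      simp only [Matrix.cons_val_zero, Matrix.cons_val_one, Matrix.head_cons]
      rw [show (((Nat.succ 0).succ : ℕ) : ℝ) = 2 by norm_num]
      rw [show a j - (e0 j + a j) / 2 = (a j - e0 j) / 2 by ring, abs_div, abs_two]
    rw [hl, sum_abs_sub_indicator z0 a e0 he0' ha.1 ha.2]
    linarith
  · have hc1 : a z1 ≤ 1/2 := by linarith
    -- profile (a, e1): voter 0's true peak is a; reporting e0 yields exactly a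
    refine ⟨![a, e1], by intro i; fin_cases i <;> simpa, ?_⟩
    have hupd : Function.update ![a, e1] 0 e0 = ![e0, e1] := by
      funext i; fin_cases i <;> simp
    have hfV : f ![a, e1] = a := by
      have : f ![a, e1] = ![a, e1] 0 := by
        apply fV_eq_peak f htruth _ (by intro i; fin_cases i <;> simpa) 0 e0 hd0
        rw [hupd]; simp; exact haeq.symm
      simpa using this
    rw [hfV]
    have hl : l1 a (propDiv ![a, e1]) = (∑ j, |a j - e1 j|) / 2 := by
      unfold l1 propDiv
      rw [Finset.sum_div]
      apply Finset.sum_congr rfl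
      intro j _
      rw [Fin.sum_univ_two]
      simp only [Matrix.cons_val_zero, Matrix.cons_val_one, Matrix.head_cons]
      rw [show (((Nat.succ 0).succ : ℕ) : ℝ) = 2 by norm_num]
      rw [show a j - (a j + e1 j) / 2 = (a j - e1 j) / 2 by ring, abs_div, abs_two]
    rw [hl, sum_abs_sub_indicator z1 a e1 he1' ha.1 ha.2]
    linarith
end

section
/- No moving phantom mechanism can achieve ℓ1-loss less than 1 − 1/m: for every m ≥ 2, every even n ≥ 2, and every moving phantom mechanism f over m projects and n voters, there exists a preference profile V with ℓ(V) = 1 − 1/m. -/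
open Finset

theorem sorted_getD_le (l : List ℝ) (hl : l.Pairwise (· ≤ ·)) (x : ℝ) :
    ∀ n : ℕ, n < (l.filter (fun a => decide (a ≤ x))).length → l.getD n 0 ≤ x := by
  induction l with
  | nil => simp
  | cons a t ih =>
    have hct := (List.pairwise_cons.mp hl)
    intro n hn
    by_cases hax : a ≤ x
    · cases n with
      | zero => simpa using hax
      | succ n =>
        simp only [List.getD_cons_succ]
        apply ih hct.2 n
        simpa [List.filter_cons, hax] using hn
    · exfalso
      have hfe : t.filter (fun a => decide (a ≤ x)) = [] := by
        rw [List.filter_eq_nil_iff]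
        intro b hb
        simp only [decide_eq_true_eq]
        exact fun hbx => hax (le_trans (hct.1 b hb) hbx)
      simp [List.filter_cons, hax, hfe] at hn

theorem le_sorted_getD (l : List ℝ) (hl : l.Pairwise (· ≤ ·)) (x : ℝ) :
    ∀ n : ℕ, n < l.length → (l.filter (fun a => decide (a < x))).length ≤ n →
      x ≤ l.getD n 0 := by
  induction l with
  | nil => simp
  | cons a t ih =>
    have hct := (List.pairwise_cons.mp hl)
    intro n hn hf
    by_cases hax : a < x
    · have hf' : (t.filter (fun a => decide (a < x))).length + 1 ≤ n := by
        simpa [List.filter_cons, hax] using hf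
      cases n with
      | zero => omega
      | succ n =>
        simp only [List.getD_cons_succ]
        exact ih hct.2 n (by simpa using hn) (by omega)
    · push_neg at hax
      cases n with
      | zero => simpa using hax
      | succ n =>
        simp only [List.getD_cons_succ]
        have hn' : n < t.length := by simpa using hn
        have hmem : t.getD n 0 ∈ t := by
          rw [List.getD_eq_getElem t 0 hn']
          exact List.getElem_mem hn'
        exact le_trans hax (hct.1 _ hmem)

theorem medianAt_le {s : Multiset ℝ} {n : ℕ} {x : ℝ}
    (h : n + 1 ≤ Multiset.countP (fun a => a ≤ x) s) : medianAt s n ≤ x := by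
  apply sorted_getD_le _ (Multiset.pairwise_sort s (· ≤ ·))
  have e : (↑(s.sort (· ≤ ·)) : Multiset ℝ) = s := Multiset.sort_eq s _
  rw [← e, Multiset.coe_countP, List.countP_eq_length_filter] at h
  omega

theorem le_medianAt {s : Multiset ℝ} {n : ℕ} {x : ℝ}
    (hc : n < Multiset.card s)
    (h : Multiset.countP (fun a => a < x) s ≤ n) : x ≤ medianAt s n := by
  apply le_sorted_getD _ (Multiset.pairwise_sort s (· ≤ ·)) _ _ (by rwa [Multiset.length_sort])
  have e : (↑(s.sort (· ≤ ·)) : Multiset ℝ) = s := Multiset.sort_eq s _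
  rw [← e, Multiset.coe_countP, List.countP_eq_length_filter] at h
  omega

theorem countP_projValues {n m : ℕ} (V : Fin n → Fin m → ℝ) (z : ℕ → ℝ) (j : Fin m)
    (p : ℝ → Prop) [DecidablePred p] :
    Multiset.countP p (projValues V z j)
      = (univ.filter (fun i : Fin n => p (V i j))).card
        + ((Finset.range (n+1)).filter (fun k => p (z k))).card := by
  unfold projValues
  rw [Multiset.countP_add, Multiset.countP_map, Multiset.countP_map]
  rfl

theorem card_projValues {n m : ℕ} (V : Fin n → Fin m → ℝ) (z : ℕ → ℝ) (j : Fin m) :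
    Multiset.card (projValues V z j) = n + (n + 1) := by
  unfold projValues
  simp
  omega

/-- No moving phantom mechanism achieves ℓ1-loss below `1 - 1/m`: for
every `m ≥ 2`, every even `n ≥ 2` and every moving phantom mechanism, there is a
profile with loss exactly `1 - 1/m`. -/
theorem moving_phantom_lower_bound {m n : ℕ} (hm : 2 ≤ m) (hn : 2 ≤ n) (he : Even n)
    (f : (Fin n → Fin m → ℝ) → (Fin m → ℝ)) (Y : PhantomSystem n)
    (hf : IsMovingPhantom f Y) :
    ∃ V : Fin n → Fin m → ℝ, (∀ i, IsDivision (V i)) ∧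
      l1 (f V) (propDiv V) = 1 - 1 / (m : ℝ) := by
  haveI : NeZero m := ⟨by omega⟩
  obtain ⟨h, hh⟩ := he
  have hh1 : 1 ≤ h := by omega
  set x : ℝ := 1 / m with hxdef
  have hmR : (2:ℝ) ≤ (m:ℝ) := by exact_mod_cast hm
  have hx0 : 0 < x := by positivity
  have hx1 : x < 1 := by
    rw [hxdef, div_lt_one (by linarith)]; linarith
  have hmx : (m:ℝ) * x = 1 := by
    rw [hxdef]; field_simp
  set V : Fin n → Fin m → ℝ :=
    fun i j => if (i:ℕ) < h then (if j = 0 then 1 else 0) else x with hVdef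
  have hdiv : ∀ i, IsDivision (V i) := by
    intro i
    constructor
    · intro j
      by_cases hi : (i:ℕ) < h <;> by_cases hj : j = 0 <;>
        simp [hVdef, hi, hj, le_of_lt hx0, le_of_lt hx1]
    · by_cases hi : (i:ℕ) < h
      · simp [hVdef, hi]
      · simp only [hVdef, hi, if_false]
        rw [Finset.sum_const, Finset.card_univ, Fintype.card_fin, nsmul_eq_mul, hmx]
  obtain ⟨t, ht, hsum, hout⟩ := hf V hdiv
  set z : ℕ → ℝ := fun k => Y.y k t with hzdef
  have hz0 : ∀ k ≤ n, 0 ≤ z k := fun k hk => (Y.mem_Icc k hk t ht).1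
  have hz1 : ∀ k ≤ n, z k ≤ 1 := fun k hk => (Y.mem_Icc k hk t ht).2
  have hmono : ∀ k k', k ≤ k' → k' ≤ n → z k ≤ z k' := fun k k' => Y.mono_idx t ht k k'
  have hhn : h ≤ n := by omega
  -- cardinality of voter halves
  have hcard_lt : (univ.filter (fun i : Fin n => (i:ℕ) < h)).card = h := by
    have : (univ.filter (fun i : Fin n => (i:ℕ) < h))
        = Finset.map (Fin.castLEEmb hhn) univ := by
      ext i
      simp only [Finset.mem_filter, Finset.mem_univ, true_and, Finset.mem_map]
      constructor
      · intro hi; exact ⟨⟨(i:ℕ), hi⟩, by simp [Fin.castLEEmb, Fin.ext_iff]⟩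
      · rintro ⟨k, rfl⟩; simpa using k.2
    rw [this, Finset.card_map, Finset.card_univ, Fintype.card_fin]
  have hcard_ge : (univ.filter (fun i : Fin n => ¬ (i:ℕ) < h)).card = h := by
    have := Finset.card_filter_add_card_filter_not
      (s := (univ : Finset (Fin n))) (p := fun i : Fin n => (i:ℕ) < h)
    rw [Finset.card_univ, Fintype.card_fin] at this
    omega
  -- phantom counting bounds
  have hph_ge : ∀ c : ℝ, z h ≤ c →
      h + 1 ≤ ((Finset.range (n+1)).filter (fun k => z k ≤ c)).card := by
    intro c hc
    have : Finset.range (h+1) ⊆ (Finset.range (n+1)).filter (fun k => z k ≤ c) := by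
      intro k hk
      simp only [Finset.mem_range] at hk
      simp only [Finset.mem_filter, Finset.mem_range]
      exact ⟨by omega, le_trans (hmono k h (by omega) hhn) hc⟩
    simpa using Finset.card_le_card this
  have hph_le : ∀ c : ℝ, c ≤ z h →
      ((Finset.range (n+1)).filter (fun k => z k < c)).card ≤ h := by
    intro c hc
    have : (Finset.range (n+1)).filter (fun k => z k < c) ⊆ Finset.range h := by
      intro k hk
      simp only [Finset.mem_filter, Finset.mem_range] at hk
      simp only [Finset.mem_range]
      by_contra hkh
      exact absurd (lt_of_le_of_lt (le_trans hc (hmono h k (by omega) (by omega))) hk.2)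
        (lt_irrefl _)
    simpa using Finset.card_le_card this
  -- median bounds
  have hmed_le_x : z h ≤ x → ∀ j, phantomMedian V z j ≤ x := by
    intro hzx j
    apply medianAt_le
    rw [countP_projValues]
    have h1 : h ≤ (univ.filter (fun i : Fin n => V i j ≤ x)).card := by
      have hsub : univ.filter (fun i : Fin n => ¬ (i:ℕ) < h)
          ⊆ univ.filter (fun i : Fin n => V i j ≤ x) := by
        intro i hi
        simp only [Finset.mem_filter, Finset.mem_univ, true_and] at hi ⊢
        simp [hVdef, hi]
      have := Finset.card_le_card hsub
      omega
    have h2 := hph_ge x hzx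
    omega
  have hmed_le_zh : ∀ j, j ≠ 0 → phantomMedian V z j ≤ z h := by
    intro j hj
    apply medianAt_le
    rw [countP_projValues]
    have h1 : h ≤ (univ.filter (fun i : Fin n => V i j ≤ z h)).card := by
      have hsub : univ.filter (fun i : Fin n => (i:ℕ) < h)
          ⊆ univ.filter (fun i : Fin n => V i j ≤ z h) := by
        intro i hi
        simp only [Finset.mem_filter, Finset.mem_univ, true_and] at hi ⊢
        simp [hVdef, hi, hj, hz0 h hhn]
      have := Finset.card_le_card hsub
      omega
    have h2 := hph_ge (z h) le_rfl
    omega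
  have hmed_ge_zh : x ≤ z h → z h ≤ phantomMedian V z 0 := by
    intro hxz
    apply le_medianAt (by rw [card_projValues]; omega)
    rw [countP_projValues]
    have h1 : (univ.filter (fun i : Fin n => V i 0 < z h)).card ≤ h := by
      have hsub : univ.filter (fun i : Fin n => V i 0 < z h)
          ⊆ univ.filter (fun i : Fin n => ¬ (i:ℕ) < h) := by
        intro i hi
        simp only [Finset.mem_filter, Finset.mem_univ, true_and] at hi ⊢
        intro hlt
        rw [hVdef] at hi
        simp only [hlt, if_true, if_pos rfl] at hi
        exact absurd hi (not_lt.mpr (hz1 h hhn))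
      have := Finset.card_le_card hsub
      omega
    have h2 := hph_le (z h) le_rfl
    omega
  have hmed_ge_x : x ≤ z h → ∀ j, x ≤ phantomMedian V z j := by
    intro hxz j
    apply le_medianAt (by rw [card_projValues]; omega)
    rw [countP_projValues]
    have h1 : (univ.filter (fun i : Fin n => V i j < x)).card ≤ h := by
      have hsub : univ.filter (fun i : Fin n => V i j < x)
          ⊆ univ.filter (fun i : Fin n => (i:ℕ) < h) := by
        intro i hi
        simp only [Finset.mem_filter, Finset.mem_univ, true_and] at hi ⊢
        by_contra hih
        rw [hVdef] at hi
        simp only [hih, if_false] at hi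
        exact absurd hi (lt_irrefl x)
      have := Finset.card_le_card hsub
      omega
    have h2 := hph_le x hxz
    omega
  -- sum decomposition
  have hsplit : ∑ j, phantomMedian V z j
      = phantomMedian V z 0 + ∑ j ∈ univ.erase 0, phantomMedian V z j :=
    (Finset.add_sum_erase _ _ (Finset.mem_univ 0)).symm
  have hcard_erase : (univ.erase (0 : Fin m)).card = m - 1 := by
    rw [Finset.card_erase_of_mem (Finset.mem_univ 0), Finset.card_univ, Fintype.card_fin]
  have hm1R : ((m - 1 : ℕ) : ℝ) = (m:ℝ) - 1 := by
    have : (1:ℕ) ≤ m := by omega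
    push_cast [this]
    ring
  -- the key claim: all medians equal x
  have hmedx : ∀ j, phantomMedian V z j = x := by
    rcases lt_trichotomy (z h) x with hlt | heq | hgt
    · exfalso
      have h0 : phantomMedian V z 0 ≤ x := hmed_le_x (le_of_lt hlt) 0
      have hrest : ∑ j ∈ univ.erase 0, phantomMedian V z j ≤ (m - 1 : ℕ) * z h := by
        have := Finset.sum_le_card_nsmul (univ.erase (0:Fin m)) (phantomMedian V z) (z h)
          (fun j hj => hmed_le_zh j (Finset.ne_of_mem_erase hj))
        rwa [hcard_erase, nsmul_eq_mul] at this
      rw [hsplit] at hsum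
      have hz0h : 0 ≤ z h := hz0 h hhn
      nlinarith [hsum, h0, hrest, hm1R]
    · intro j
      exact le_antisymm (hmed_le_x (le_of_eq heq) j) (heq ▸ hmed_ge_x (le_of_eq heq.symm) j)
    · exfalso
      have h0 : z h ≤ phantomMedian V z 0 := hmed_ge_zh (le_of_lt hgt)
      have hrest : (m - 1 : ℕ) * x ≤ ∑ j ∈ univ.erase 0, phantomMedian V z j := by
        have := Finset.card_nsmul_le_sum (univ.erase (0:Fin m)) (phantomMedian V z) x
          (fun j hj => hmed_ge_x (le_of_lt hgt) j)
        rwa [hcard_erase, nsmul_eq_mul] at this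
      rw [hsplit] at hsum
      nlinarith [hsum, h0, hrest, hm1R]
  have hfV : ∀ j, f V j = x := fun j => (hout j).trans (hmedx j)
  -- proportional division
  have hnR : (n:ℝ) = 2 * h := by
    rw [hh]; push_cast; ring
  have hhR : (0:ℝ) < (h:ℝ) := by exact_mod_cast hh1
  have hsumV : ∀ j : Fin m, ∑ i, V i j = h * (if j = 0 then (1:ℝ) else 0) + h * x := by
    intro j
    rw [show (fun i => V i j) = (fun i : Fin n =>
      if (i:ℕ) < h then (if j = 0 then (1:ℝ) else 0) else x) from rfl]
    rw [Finset.sum_ite, Finset.sum_const, Finset.sum_const, hcard_lt, hcard_ge,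
      nsmul_eq_mul, nsmul_eq_mul]
  have hprop : ∀ j : Fin m, propDiv V j = if j = 0 then (1+x)/2 else x/2 := by
    intro j
    unfold propDiv
    rw [hsumV j, hnR]
    by_cases hj : j = 0
    · rw [if_pos hj, if_pos hj]
      field_simp
    · rw [if_neg hj, if_neg hj]
      field_simp
      ring
  -- final computation
  refine ⟨V, hdiv, ?_⟩
  unfold l1
  have habs : ∀ j : Fin m, |f V j - propDiv V j|
      = x/2 + (if j = 0 then (1 - 2*x) / 2 else 0) := by
    intro j
    rw [hfV j, hprop j]
    by_cases hj : j = 0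
    · rw [if_pos hj, if_pos hj, abs_of_nonpos (by linarith)]
      have hx2 : x ≤ 1/2 := by
        rw [hxdef, div_le_div_iff₀ (by linarith) (by norm_num)]
        linarith
      ring
    · rw [if_neg hj, if_neg hj, abs_of_nonneg (by linarith)]
      ring
  rw [Finset.sum_congr rfl (fun j _ => habs j), Finset.sum_add_distrib,
    Finset.sum_const, Finset.sum_ite_eq' univ (0 : Fin m) (fun _ => (1 - 2*x)/2),
    Finset.card_univ, Fintype.card_fin, if_pos (Finset.mem_univ _), nsmul_eq_mul]
  rw [hxdef]
  field_simp
  ring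
end

section
/- Let m ≥ 2, let n ≥ 2 be even, and consider the preference profile V over m projects in which n/2 voters propose (1,0,…,0) and the other n/2 voters propose the uniform division (1/m,…,1/m). Then every moving phantom mechanism outputs the uniform division (1/m,…,1/m) on V. -/
open Finset

lemma L1' (c : ℝ) : ∀ (l : List ℝ), l.Pairwise (· ≤ ·) → ∀ (k : ℕ) (hk : k < l.length),
    k + 1 ≤ (l.filter (fun x => decide (x ≤ c))).length → l.get ⟨k, hk⟩ ≤ c := by
  intro l
  induction l with
  | nil => intro _ k hk; simp at hk
  | cons a t ih =>
    intro hs k hk hcount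
    by_cases hac : a ≤ c
    · cases k with
      | zero => simpa using hac
      | succ k =>
        have ht : t.Pairwise (· ≤ ·) := hs.of_cons
        have h2 : k + 1 ≤ (t.filter (fun x => decide (x ≤ c))).length := by
          have := hcount
          rw [List.filter_cons_of_pos (by simpa using hac)] at this
          simpa using this
        exact ih ht k (by simpa using hk) h2
    · exfalso
      have hnil : (a :: t).filter (fun x => decide (x ≤ c)) = [] := by
        rw [List.filter_eq_nil_iff]
        intro x hx
        rcases List.mem_cons.mp hx with rfl | hx
        · simpa using hac
        · have : a ≤ x := (List.pairwise_cons.mp hs).1 x hx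
          simp only [decide_eq_true_eq]
          intro h; exact hac (le_trans this h)
      rw [hnil] at hcount; simp at hcount

lemma L2' (c : ℝ) : ∀ (l : List ℝ), l.Pairwise (· ≤ ·) → ∀ (k : ℕ) (hk : k < l.length),
    l.get ⟨k, hk⟩ < c → k + 1 ≤ (l.filter (fun x => decide (x < c))).length := by
  intro l
  induction l with
  | nil => intro _ k hk; simp at hk
  | cons a t ih =>
    intro hs k hk hlt
    cases k with
    | zero =>
      have : a < c := by simpa using hlt
      rw [List.filter_cons_of_pos (by simpa using this)]
      simp
    | succ k =>
      have hk' : k < t.length := by simpa using hk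
      have htk : t.get ⟨k, hk'⟩ < c := by simpa using hlt
      have ha : a < c :=
        lt_of_le_of_lt ((List.pairwise_cons.mp hs).1 _ (t.get_mem ⟨k, hk'⟩)) htk
      have := ih hs.of_cons k hk' htk
      rw [List.filter_cons_of_pos (by simpa using ha)]
      simpa using Nat.succ_le_succ this

lemma med_le (s : Multiset ℝ) (k : ℕ) (c : ℝ) (hcard : s.card = 2 * k + 1)
    (h : k + 1 ≤ (s.filter (fun x => x ≤ c)).card) : medianAt s k ≤ c := by
  set l := s.sort (· ≤ ·) with hl
  have hlen : l.length = 2 * k + 1 := by rw [hl, Multiset.length_sort, hcard]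
  have hk : k < l.length := by omega
  have hsort : l.Pairwise (· ≤ ·) := s.pairwise_sort _
  have hfil : (s.filter (fun x => x ≤ c)).card = (l.filter (fun x => decide (x ≤ c))).length := by
    conv_lhs => rw [← s.sort_eq (· ≤ ·)]
    rfl
  have : l.getD k 0 = l.get ⟨k, hk⟩ := List.getD_eq_getElem (l := l) (d := 0) hk
  rw [medianAt, ← hl, this]
  exact L1' c l hsort k hk (by rw [← hfil]; exact h)

lemma med_ge (s : Multiset ℝ) (k : ℕ) (c : ℝ) (hcard : s.card = 2 * k + 1)
    (h : k + 1 ≤ (s.filter (fun x => c ≤ x)).card) : c ≤ medianAt s k := by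
  by_contra hlt
  push_neg at hlt
  set l := s.sort (· ≤ ·) with hl
  have hlen : l.length = 2 * k + 1 := by rw [hl, Multiset.length_sort, hcard]
  have hk : k < l.length := by omega
  have hsort : l.Pairwise (· ≤ ·) := s.pairwise_sort _
  have hget : l.get ⟨k, hk⟩ < c := by
    rw [medianAt, ← hl, List.getD_eq_getElem (l := l) (d := 0) hk] at hlt; exact hlt
  have h2 := L2' c l hsort k hk hget
  have hfil : (s.filter (fun x => x < c)).card = (l.filter (fun x => decide (x < c))).length := by
    conv_lhs => rw [← s.sort_eq (· ≤ ·)]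
    rfl
  have heq : s.filter (fun x => ¬ (c ≤ x)) = s.filter (fun x => x < c) :=
    Multiset.filter_congr (by intro x _; simp [not_le])
  have hsplit := congrArg Multiset.card (Multiset.filter_add_not (fun x => c ≤ x) s)
  rw [Multiset.card_add, heq] at hsplit
  omega

/-- On the profile where `n/2` voters propose `(1,0,…,0)` and the other
`n/2` voters propose the uniform division `(1/m,…,1/m)`, every moving phantom
mechanism outputs the uniform division. -/
theorem moving_phantom_uniform_output {m n : ℕ} (hm : 2 ≤ m) (hn : 2 ≤ n) (he : Even n)
    (f : (Fin n → Fin m → ℝ) → (Fin m → ℝ)) (Y : PhantomSystem n)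
    (hf : IsMovingPhantom f Y) :
    f (fun i j => if (i : ℕ) < n / 2 then (if (j : ℕ) = 0 then 1 else 0)
        else 1 / (m : ℝ))
      = fun _ => 1 / (m : ℝ) := by
  set V : Fin n → Fin m → ℝ := fun i j => if (i : ℕ) < n / 2 then (if (j : ℕ) = 0 then 1 else 0)
        else 1 / (m : ℝ) with hV
  have hmpos : (0:ℝ) < m := by exact_mod_cast (by omega : 0 < m)
  have hm1 : (1:ℝ) ≤ m := by exact_mod_cast (by omega : 1 ≤ m)
  have h1m0 : (0:ℝ) ≤ 1 / m := by positivity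
  have h1m1 : (1:ℝ) / m ≤ 1 := by
    rw [div_le_one hmpos]; exact hm1
  have hsum_unif : ∑ _j : Fin m, (1 / (m:ℝ)) = 1 := by
    rw [Finset.sum_const, Finset.card_univ, Fintype.card_fin, nsmul_eq_mul]
    field_simp
  have hsum_single : ∑ j : Fin m, (if (j:ℕ) = 0 then (1:ℝ) else 0) = 1 := by
    rw [Finset.sum_eq_single (⟨0, by omega⟩ : Fin m)]
    · simp
    · intro b _ hb
      have hb' : (b:ℕ) ≠ 0 := fun h => hb (Fin.ext h)
      simp [hb']
    · intro h; exact absurd (Finset.mem_univ _) h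
  have hdiv : ∀ i, IsDivision (V i) := by
    intro i
    constructor
    · intro j
      by_cases hi : (i:ℕ) < n/2
      · by_cases hj : (j:ℕ) = 0 <;> simp [hV, hi, hj]
      · simp only [hV, if_neg hi]
        exact ⟨h1m0, h1m1⟩
    · by_cases hi : (i:ℕ) < n/2
      · simp only [hV, if_pos hi]; exact hsum_single
      · simp only [hV, if_neg hi]; exact hsum_unif
  obtain ⟨t, ht, hsum, hout⟩ := hf V hdiv
  set p : ℕ → ℝ := fun k => Y.y k t with hp
  -- cardinality of projValues
  have hcard : ∀ j, (projValues V p j).card = 2 * n + 1 := by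
    intro j
    simp only [projValues, Multiset.card_add, Multiset.card_map]
    have h1 : Multiset.card Finset.univ.val = Fintype.card (Fin n) := Finset.card_univ
    have h2 : Multiset.card (Finset.range (n+1)).val = n + 1 := Finset.card_range (n+1)
    rw [h1, h2, Fintype.card_fin]; omega
  -- voter counting
  have hhalf : (Finset.univ.filter (fun i : Fin n => (i:ℕ) < n/2)).card = n/2 := by
    have heq : Finset.univ.filter (fun i : Fin n => (i:ℕ) < n/2)
        = Finset.Iio (⟨n/2, by omega⟩ : Fin n) := by
      ext i; simp [Finset.mem_Iio, Fin.lt_def]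
    rw [heq, Fin.card_Iio]
  have hnothalf : (Finset.univ.filter (fun i : Fin n => ¬ (i:ℕ) < n/2)).card = n - n/2 := by
    have := Finset.card_filter_add_card_filter_not
      (s := (Finset.univ : Finset (Fin n))) (p := fun i : Fin n => (i:ℕ) < n/2)
    rw [Finset.card_univ, Fintype.card_fin, hhalf] at this
    omega
  have hvoters : ∀ (q : ℝ → Prop) [DecidablePred q], q (1/(m:ℝ)) → ∀ j : Fin m,
      n - n/2 ≤ Multiset.card (Multiset.filter q (Multiset.map (fun i => V i j) Finset.univ.val)) := by
    intro q _ hq j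
    rw [← Multiset.countP_eq_card_filter, Multiset.countP_map]
    have hsub : Finset.univ.filter (fun i : Fin n => ¬ (i:ℕ) < n/2)
        ⊆ Finset.univ.filter (fun i : Fin n => q (V i j)) := by
      intro i hi
      simp only [Finset.mem_filter, Finset.mem_univ, true_and] at hi ⊢
      have : V i j = 1/(m:ℝ) := by simp [hV, if_neg hi]
      rw [this]; exact hq
    have hle := Finset.card_le_card hsub
    rw [hnothalf] at hle
    have : Multiset.card (Multiset.filter (fun i => q (V i j)) Finset.univ.val)
        = (Finset.univ.filter (fun i : Fin n => q (V i j))).card := by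
      rw [← Finset.filter_val]; rfl
    rw [this]
    exact hle
  have hphant : ∀ (q : ℝ → Prop) [DecidablePred q],
      Multiset.card (Multiset.filter q (Multiset.map p (Finset.range (n+1)).val))
        = ((Finset.range (n+1)).filter (fun k => q (p k))).card := by
    intro q _
    rw [← Multiset.countP_eq_card_filter, Multiset.countP_map, ← Finset.filter_val]
    rfl
  -- main case split
  have key : ∀ j, phantomMedian V p j = 1/(m:ℝ) := by
    by_cases hA : n/2 + 1 ≤ ((Finset.range (n+1)).filter (fun k => p k ≤ 1/(m:ℝ))).card
    · -- all medians ≤ 1/m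
      have hmed : ∀ j, phantomMedian V p j ≤ 1/(m:ℝ) := by
        intro j
        apply med_le _ n _ (hcard j)
        have hv := hvoters (fun x => x ≤ 1/(m:ℝ)) le_rfl j
        rw [projValues, Multiset.filter_add, Multiset.card_add, hphant]
        omega
      intro j
      have := (Finset.sum_eq_sum_iff_of_le (fun j _ => hmed j)).mp
        (by rw [hsum, hsum_unif]) j (Finset.mem_univ j)
      exact this
    · have hB : n/2 + 1 ≤ ((Finset.range (n+1)).filter (fun k => 1/(m:ℝ) ≤ p k)).card := by
        push_neg at hA
        have hsplit := Finset.card_filter_add_card_filter_not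
          (s := Finset.range (n+1)) (p := fun k => p k ≤ 1/(m:ℝ))
        rw [Finset.card_range] at hsplit
        have hsub : (Finset.range (n+1)).filter (fun k => ¬ p k ≤ 1/(m:ℝ))
            ⊆ (Finset.range (n+1)).filter (fun k => 1/(m:ℝ) ≤ p k) := by
          intro k hk
          simp only [Finset.mem_filter] at hk ⊢
          exact ⟨hk.1, le_of_lt (not_le.mp hk.2)⟩
        have := Finset.card_le_card hsub
        omega
      have hmed : ∀ j, 1/(m:ℝ) ≤ phantomMedian V p j := by
        intro j
        apply med_ge _ n _ (hcard j)
        have hv := hvoters (fun x => 1/(m:ℝ) ≤ x) le_rfl j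
        rw [projValues, Multiset.filter_add, Multiset.card_add, hphant]
        omega
      intro j
      have := (Finset.sum_eq_sum_iff_of_le (fun j _ => hmed j)).mp
        (by rw [hsum, hsum_unif]) j (Finset.mem_univ j)
      exact this.symm
  funext j
  rw [hout j, key j]
end

section
/- Let ρ = 2 − √2 and n ≥ 2. Consider the preference profile V over 3 projects in which ⌊nρ⌋ voters propose (1,0,0) and ⌈n(1−ρ)⌉ voters propose x = (√2 − 1, 1 − √2/2, 1 − √2/2). Then the Independent Markets mechanism outputs exactly x on V (a feasible phantom parameter is t* = √2/(2n)). -/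
open Finset

/-- The lower-bound profile for the Independent Markets mechanism: with
`ρ = 2 - √2`, `⌊nρ⌋` voters propose `(1,0,0)` and the remaining
`⌈n(1-ρ)⌉` voters propose `(√2 - 1, 1 - √2/2, 1 - √2/2)`. -/
noncomputable def imProfile (n : ℕ) : Fin n → Fin 3 → ℝ :=
  fun i j =>
    if (i : ℕ) < Nat.floor ((n : ℝ) * (2 - Real.sqrt 2)) then
      (if (j : ℕ) = 0 then 1 else 0)
    else
      (if (j : ℕ) = 0 then Real.sqrt 2 - 1 else 1 - Real.sqrt 2 / 2)

section AuxIM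

open Multiset in
lemma aux_sorted_getElem_mono {l : List ℝ} (hl : l.Pairwise (· ≤ ·)) {i j : ℕ} (hij : i ≤ j)
    (hj : j < l.length) : l[i]'(lt_of_le_of_lt hij hj) ≤ l[j] := by
  rcases eq_or_lt_of_le hij with rfl | h
  · exact le_refl _
  · exact List.pairwise_iff_getElem.mp hl i j _ _ h

lemma aux_countP_sort (s : Multiset ℝ) (p : ℝ → Prop) [DecidablePred p] :
    Multiset.countP p s = (s.sort (· ≤ ·)).countP (fun x => decide (p x)) := by
  have h : ((s.sort (· ≤ ·) : List ℝ) : Multiset ℝ) = s := Multiset.sort_eq _ _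
  conv_lhs => rw [← h]
  rfl

lemma aux_medianAt_le {s : Multiset ℝ} {n : ℕ} (hn : n < Multiset.card s) {a : ℝ}
    (h : n + 1 ≤ Multiset.countP (fun x => x ≤ a) s) : medianAt s n ≤ a := by
  classical
  have hsort : (s.sort (· ≤ ·)).Pairwise (· ≤ ·) := Multiset.pairwise_sort s (· ≤ ·)
  set l := s.sort (· ≤ ·) with hldef
  have hlen : l.length = Multiset.card s := Multiset.length_sort (· ≤ ·)
  have hnl : n < l.length := by omega
  have hcount : Multiset.countP (fun x => x ≤ a) s = l.countP (fun x => decide (x ≤ a)) :=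
    aux_countP_sort s _
  rw [medianAt, List.getD_eq_getElem _ _ hnl]
  by_contra hc
  push_neg at hc
  have hzero : (l.drop n).countP (fun x => decide (x ≤ a)) = 0 := by
    rw [List.countP_eq_zero]
    intro x hx
    simp only [decide_eq_true_eq]
    rw [List.mem_iff_getElem] at hx
    obtain ⟨i, hi, rfl⟩ := hx
    rw [List.getElem_drop ..]
    have hh : l[n] ≤ l[n + i]'(by rw [List.length_drop] at hi; omega) :=
      aux_sorted_getElem_mono hsort (Nat.le_add_right _ _) _
    push_neg
    exact lt_of_lt_of_le hc hh
  have hsplit : l.countP (fun x => decide (x ≤ a))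
      = (l.take n).countP (fun x => decide (x ≤ a)) + (l.drop n).countP (fun x => decide (x ≤ a)) := by
    rw [← List.countP_append, List.take_append_drop]
  have htake : (l.take n).countP (fun x => decide (x ≤ a)) ≤ n := by
    calc (l.take n).countP (fun x => decide (x ≤ a)) ≤ (l.take n).length := List.countP_le_length
    _ ≤ n := by simp [List.length_take]
  rw [hcount] at h
  omega

lemma aux_le_medianAt {s : Multiset ℝ} {n : ℕ} (hn : n < Multiset.card s) {a : ℝ}
    (h : Multiset.countP (fun x => x < a) s ≤ n) : a ≤ medianAt s n := by
  classical
  have hsort : (s.sort (· ≤ ·)).Pairwise (· ≤ ·) := Multiset.pairwise_sort s (· ≤ ·)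
  set l := s.sort (· ≤ ·) with hldef
  have hlen : l.length = Multiset.card s := Multiset.length_sort (· ≤ ·)
  have hnl : n < l.length := by omega
  have hcount : Multiset.countP (fun x => x < a) s = l.countP (fun x => decide (x < a)) :=
    aux_countP_sort s _
  rw [medianAt, List.getD_eq_getElem _ _ hnl]
  by_contra hc
  push_neg at hc
  have htake : (l.take (n+1)).countP (fun x => decide (x < a)) = n + 1 := by
    rw [List.countP_eq_length.2, List.length_take]
    · omega
    · intro x hx
      rw [List.mem_iff_getElem] at hx
      obtain ⟨i, hi, rfl⟩ := hx
      have hle : i ≤ n := by rw [List.length_take] at hi; omega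
      rw [List.getElem_take]
      simp only [decide_eq_true_eq]
      exact lt_of_le_of_lt (aux_sorted_getElem_mono hsort hle hnl) hc
  have hsplit : l.countP (fun x => decide (x < a))
      = (l.take (n+1)).countP (fun x => decide (x < a)) + (l.drop (n+1)).countP (fun x => decide (x < a)) := by
    rw [← List.countP_append, List.take_append_drop]
  rw [hcount] at h
  omega

lemma aux_countP_medianAt {s : Multiset ℝ} {n : ℕ} (hn : n < Multiset.card s) :
    n + 1 ≤ Multiset.countP (fun x => x ≤ medianAt s n) s := by
  classical
  have hsort : (s.sort (· ≤ ·)).Pairwise (· ≤ ·) := Multiset.pairwise_sort s (· ≤ ·)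
  set l := s.sort (· ≤ ·) with hldef
  have hlen : l.length = Multiset.card s := Multiset.length_sort (· ≤ ·)
  have hnl : n < l.length := by omega
  have hmed : medianAt s n = l[n] := List.getD_eq_getElem _ _ hnl
  have hcount : Multiset.countP (fun x => x ≤ medianAt s n) s
      = l.countP (fun x => decide (x ≤ medianAt s n)) := aux_countP_sort s _
  have htake : (l.take (n+1)).countP (fun x => decide (x ≤ medianAt s n)) = n + 1 := by
    rw [List.countP_eq_length.2, List.length_take]
    · omega
    · intro x hx
      rw [List.mem_iff_getElem] at hx
      obtain ⟨i, hi, rfl⟩ := hx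
      have hle : i ≤ n := by rw [List.length_take] at hi; omega
      rw [List.getElem_take]
      simp only [decide_eq_true_eq]
      rw [hmed]
      exact aux_sorted_getElem_mono hsort hle hnl
  have hsplit : l.countP (fun x => decide (x ≤ medianAt s n))
      = (l.take (n+1)).countP (fun x => decide (x ≤ medianAt s n))
        + (l.drop (n+1)).countP (fun x => decide (x ≤ medianAt s n)) := by
    rw [← List.countP_append, List.take_append_drop]
  rw [hcount]
  omega

lemma aux_countP_projValues {n m : ℕ} (V : Fin n → Fin m → ℝ) (pf : ℕ → ℝ) (j : Fin m)
    (p : ℝ → Prop) [DecidablePred p] :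
    Multiset.countP p (projValues V pf j) =
      (Finset.univ.filter (fun i : Fin n => p (V i j))).card +
      ((Finset.range (n+1)).filter (fun k => p (pf k))).card := by
  rw [projValues, Multiset.countP_add, Multiset.countP_map, Multiset.countP_map]
  rfl

lemma aux_card_projValues {n m : ℕ} (V : Fin n → Fin m → ℝ) (pf : ℕ → ℝ) (j : Fin m) :
    Multiset.card (projValues V pf j) = 2 * n + 1 := by
  simp [projValues]
  omega

lemma aux_phantomMedian_mono {n m : ℕ} (V : Fin n → Fin m → ℝ) {pf qf : ℕ → ℝ}
    (h : ∀ k, k ≤ n → pf k ≤ qf k) (j : Fin m) :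
    phantomMedian V pf j ≤ phantomMedian V qf j := by
  classical
  have hcard : ∀ rf : ℕ → ℝ, n < Multiset.card (projValues V rf j) := by
    intro rf; rw [aux_card_projValues]; omega
  set a := medianAt (projValues V qf j) n with ha
  have h1 : n + 1 ≤ Multiset.countP (fun x => x ≤ a) (projValues V qf j) :=
    aux_countP_medianAt (hcard qf)
  show medianAt (projValues V pf j) n ≤ a
  apply aux_medianAt_le (hcard pf)
  rw [aux_countP_projValues] at h1 ⊢
  have hsub : ((Finset.range (n+1)).filter (fun k => qf k ≤ a))
      ⊆ ((Finset.range (n+1)).filter (fun k => pf k ≤ a)) := by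
    intro k hk
    simp only [Finset.mem_filter, Finset.mem_range] at hk ⊢
    exact ⟨hk.1, le_trans (h k (by omega)) hk.2⟩
  have := Finset.card_le_card hsub
  omega

lemma aux_card_filter_fin_lt (n f : ℕ) (hf : f ≤ n) :
    ((Finset.univ : Finset (Fin n)).filter (fun i : Fin n => (i : ℕ) < f)).card = f := by
  classical
  have h : ((Finset.univ : Finset (Fin n)).filter (fun i : Fin n => (i : ℕ) < f)).card
      = (Finset.range f).card := by
    apply Finset.card_bij (fun (i : Fin n) _ => (i : ℕ))
    · intro a ha
      simp only [Finset.mem_filter] at ha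
      exact Finset.mem_range.2 ha.2
    · intro a ha b hb hab
      exact Fin.val_injective hab
    · intro b hb
      refine ⟨⟨b, lt_of_lt_of_le (Finset.mem_range.mp hb) hf⟩, ?_, rfl⟩
      simp [Finset.mem_range.mp hb]
  rw [h, Finset.card_range]

end AuxIM

lemma aux_s_basic : 1 < Real.sqrt 2 ∧ Real.sqrt 2 < 3 / 2 := by
  have hs2 : Real.sqrt 2 ^ 2 = 2 := Real.sq_sqrt (by norm_num)
  have hs0 := Real.sqrt_nonneg 2
  constructor <;> nlinarith

lemma aux_min_eq (nr s k : ℝ) (h2n : 0 < 2 * nr) (hk0 : 0 ≤ k) (hkn : k ≤ nr)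
    (hs0 : 0 ≤ s) (hs32 : s < 3 / 2) : min (k * (s / (2 * nr))) 1 = k * (s / (2 * nr)) := by
  apply min_eq_left
  rw [← mul_div_assoc, div_le_one h2n]
  nlinarith [mul_le_mul_of_nonneg_right hkn hs0]

lemma aux_key0 (nr s k : ℝ) (h2n : 0 < 2 * nr) (hs0 : 0 ≤ s) (hs2 : s ^ 2 = 2) (hs1 : 1 < s) :
    k * (s / (2 * nr)) ≤ s - 1 ↔ k ≤ nr * (2 - s) := by
  rw [← mul_div_assoc, div_le_iff₀ h2n]
  constructor <;> intro h
  · nlinarith [mul_le_mul_of_nonneg_right h hs0]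
  · nlinarith [mul_le_mul_of_nonneg_right h hs0]

lemma aux_key0s (nr s k : ℝ) (h2n : 0 < 2 * nr) (hs0 : 0 ≤ s) (hs2 : s ^ 2 = 2) (hs1 : 1 < s) :
    k * (s / (2 * nr)) < s - 1 ↔ k < nr * (2 - s) := by
  rw [← mul_div_assoc, div_lt_iff₀ h2n]
  constructor <;> intro h
  · nlinarith [mul_lt_mul_of_pos_right h (by linarith : (0:ℝ) < s)]
  · nlinarith [mul_lt_mul_of_pos_right h (by linarith : (0:ℝ) < s)]

lemma aux_key1 (nr s k : ℝ) (h2n : 0 < 2 * nr) (hs0 : 0 ≤ s) (hs2 : s ^ 2 = 2) (hs1 : 1 < s) :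
    k * (s / (2 * nr)) ≤ 1 - s / 2 ↔ k ≤ nr * (s - 1) := by
  rw [← mul_div_assoc, div_le_iff₀ h2n]
  constructor <;> intro h
  · nlinarith [mul_le_mul_of_nonneg_right h hs0]
  · nlinarith [mul_le_mul_of_nonneg_right h hs0]

lemma aux_key1s (nr s k : ℝ) (h2n : 0 < 2 * nr) (hs0 : 0 ≤ s) (hs2 : s ^ 2 = 2) (hs1 : 1 < s) :
    k * (s / (2 * nr)) < 1 - s / 2 ↔ k < nr * (s - 1) := by
  rw [← mul_div_assoc, div_lt_iff₀ h2n]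
  constructor <;> intro h
  · nlinarith [mul_lt_mul_of_pos_right h (by linarith : (0:ℝ) < s)]
  · nlinarith [mul_lt_mul_of_pos_right h (by linarith : (0:ℝ) < s)]

lemma aux_im_median_eq (n : ℕ) (hn : 2 ≤ n) (j : Fin 3) :
    phantomMedian (imProfile n) (fun k : ℕ => min ((k : ℝ) * (Real.sqrt 2 / (2 * (n : ℝ)))) 1) j
      = (if (j : ℕ) = 0 then Real.sqrt 2 - 1 else 1 - Real.sqrt 2 / 2) := by
  classical
  set s := Real.sqrt 2 with hsdef
  have hs0 : 0 ≤ s := Real.sqrt_nonneg 2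
  have hs2 : s ^ 2 = 2 := Real.sq_sqrt (by norm_num)
  have hs1 : 1 < s := aux_s_basic.1
  have hs32 : s < 3 / 2 := aux_s_basic.2
  have hid : (n : ℝ) * (2 - s) + (n : ℝ) * (s - 1) = n := by ring
  have hnR : (2 : ℝ) ≤ (n : ℝ) := by exact_mod_cast hn
  have hn0 : (0 : ℝ) < n := by linarith
  have h2n : (0 : ℝ) < 2 * n := by linarith
  set f := Nat.floor ((n : ℝ) * (2 - s)) with hfdef
  set g := Nat.floor ((n : ℝ) * (s - 1)) with hgdef
  have hnz : n ≠ 0 := by omega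
  have hirr2 : Irrational ((n : ℝ) * (2 - s)) := by
    have h1 : Irrational (2 - s) := by simpa using irrational_sqrt_two.natCast_sub 2
    exact h1.natCast_mul hnz
  have hirr1 : Irrational ((n : ℝ) * (s - 1)) := by
    have h1 : Irrational (s - 1) := by simpa using irrational_sqrt_two.sub_natCast 1
    exact h1.natCast_mul hnz
  have hρpos : (0 : ℝ) ≤ (n : ℝ) * (2 - s) := mul_nonneg (le_of_lt hn0) (by linarith)
  have hσpos : (0 : ℝ) ≤ (n : ℝ) * (s - 1) := mul_nonneg (le_of_lt hn0) (by linarith)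
  have hf_le : (f : ℝ) ≤ (n : ℝ) * (2 - s) := Nat.floor_le hρpos
  have hf_lt : (f : ℝ) < (n : ℝ) * (2 - s) := lt_of_le_of_ne hf_le (Ne.symm (hirr2.ne_nat f))
  have hf_ub : (n : ℝ) * (2 - s) < f + 1 := Nat.lt_floor_add_one _
  have hg_le : (g : ℝ) ≤ (n : ℝ) * (s - 1) := Nat.floor_le hσpos
  have hg_lt : (g : ℝ) < (n : ℝ) * (s - 1) := lt_of_le_of_ne hg_le (Ne.symm (hirr1.ne_nat g))
  have hg_ub : (n : ℝ) * (s - 1) < g + 1 := Nat.lt_floor_add_one _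
  have hf1 : 1 ≤ f := Nat.le_floor (by
    push_cast
    have h := mul_le_mul_of_nonneg_right hnR (show (0:ℝ) ≤ 2 - s by linarith)
    linarith)
  have hfn : f + 1 ≤ n := by
    have hpos : (0:ℝ) < (n : ℝ) * (s - 1) := mul_pos hn0 (by linarith)
    have h1 : (f : ℝ) < n := lt_of_le_of_lt hf_le (by linarith)
    have h2 : f < n := by exact_mod_cast h1
    omega
  have hfg : f + g + 1 = n := by
    have h1 : (f : ℝ) + g < n := by linarith
    have h2 : (n : ℝ) < (f : ℝ) + g + 2 := by linarith
    have h1' : f + g < n := by exact_mod_cast h1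
    have h2' : n < f + g + 2 := by exact_mod_cast h2
    omega
  have hgn : g + 1 ≤ n := by omega
  -- min removal
  have hts : ∀ k : ℕ, k ≤ n → min ((k : ℝ) * (s / (2 * n))) 1 = (k : ℝ) * (s / (2 * n)) := by
    intro k hk
    exact aux_min_eq _ _ _ h2n (Nat.cast_nonneg k) (Nat.cast_le.2 hk) hs0 hs32
  have key0 : ∀ k : ℕ, ((k : ℝ) * (s / (2 * n)) ≤ s - 1 ↔ (k : ℝ) ≤ (n : ℝ) * (2 - s)) :=
    fun k => aux_key0 _ _ _ h2n hs0 hs2 hs1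
  have key0s : ∀ k : ℕ, ((k : ℝ) * (s / (2 * n)) < s - 1 ↔ (k : ℝ) < (n : ℝ) * (2 - s)) :=
    fun k => aux_key0s _ _ _ h2n hs0 hs2 hs1
  have key1 : ∀ k : ℕ, ((k : ℝ) * (s / (2 * n)) ≤ 1 - s / 2 ↔ (k : ℝ) ≤ (n : ℝ) * (s - 1)) :=
    fun k => aux_key1 _ _ _ h2n hs0 hs2 hs1
  have key1s : ∀ k : ℕ, ((k : ℝ) * (s / (2 * n)) < 1 - s / 2 ↔ (k : ℝ) < (n : ℝ) * (s - 1)) :=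
    fun k => aux_key1s _ _ _ h2n hs0 hs2 hs1
  -- phantom filters
  have hph_le_a : ((Finset.range (n + 1)).filter
      (fun k : ℕ => min ((k : ℝ) * (s / (2 * n))) 1 ≤ s - 1)) = Finset.range (f + 1) := by
    ext k
    simp only [Finset.mem_filter, Finset.mem_range]
    constructor
    · rintro ⟨hk1, hk2⟩
      rw [hts k (by omega)] at hk2
      have h3 := (key0 k).1 hk2
      have hkf : k ≤ f := Nat.le_floor h3
      omega
    · intro hk
      have hkn : k ≤ n := by omega
      refine ⟨by omega, ?_⟩
      rw [hts k hkn]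
      refine (key0 k).2 (le_trans ?_ hf_le)
      exact_mod_cast (by omega : k ≤ f)
  have hph_lt_a : ((Finset.range (n + 1)).filter
      (fun k : ℕ => min ((k : ℝ) * (s / (2 * n))) 1 < s - 1)) = Finset.range (f + 1) := by
    ext k
    simp only [Finset.mem_filter, Finset.mem_range]
    constructor
    · rintro ⟨hk1, hk2⟩
      rw [hts k (by omega)] at hk2
      have h3 := (key0 k).1 (le_of_lt hk2)
      have hkf : k ≤ f := Nat.le_floor h3
      omega
    · intro hk
      have hkn : k ≤ n := by omega
      refine ⟨by omega, ?_⟩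
      rw [hts k hkn]
      refine (key0s k).2 (lt_of_le_of_lt ?_ hf_lt)
      exact_mod_cast (by omega : k ≤ f)
  have hph_le_b : ((Finset.range (n + 1)).filter
      (fun k : ℕ => min ((k : ℝ) * (s / (2 * n))) 1 ≤ 1 - s / 2)) = Finset.range (g + 1) := by
    ext k
    simp only [Finset.mem_filter, Finset.mem_range]
    constructor
    · rintro ⟨hk1, hk2⟩
      rw [hts k (by omega)] at hk2
      have h3 := (key1 k).1 hk2
      have hkf : k ≤ g := Nat.le_floor h3
      omega
    · intro hk
      have hkn : k ≤ n := by omega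
      refine ⟨by omega, ?_⟩
      rw [hts k hkn]
      refine (key1 k).2 (le_trans ?_ hg_le)
      exact_mod_cast (by omega : k ≤ g)
  have hph_lt_b : ((Finset.range (n + 1)).filter
      (fun k : ℕ => min ((k : ℝ) * (s / (2 * n))) 1 < 1 - s / 2)) = Finset.range (g + 1) := by
    ext k
    simp only [Finset.mem_filter, Finset.mem_range]
    constructor
    · rintro ⟨hk1, hk2⟩
      rw [hts k (by omega)] at hk2
      have h3 := (key1 k).1 (le_of_lt hk2)
      have hkf : k ≤ g := Nat.le_floor h3
      omega
    · intro hk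
      have hkn : k ≤ n := by omega
      refine ⟨by omega, ?_⟩
      rw [hts k hkn]
      refine (key1s k).2 (lt_of_le_of_lt ?_ hg_lt)
      exact_mod_cast (by omega : k ≤ g)
  -- profile values
  have hprofile : ∀ i : Fin n, ∀ j' : Fin 3, imProfile n i j'
      = if (i : ℕ) < f then (if (j' : ℕ) = 0 then 1 else 0)
        else (if (j' : ℕ) = 0 then s - 1 else 1 - s / 2) := by
    intro i j'
    simp only [imProfile, hfdef, hsdef]
  have hcard_lt : ((Finset.univ : Finset (Fin n)).filter (fun i : Fin n => (i : ℕ) < f)).card = f :=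
    aux_card_filter_fin_lt n f (by omega)
  have hcard_not : ((Finset.univ : Finset (Fin n)).filter (fun i : Fin n => ¬ ((i : ℕ) < f))).card
      = n - f := by
    have h1 := Finset.card_filter_add_card_filter_not
      (s := (Finset.univ : Finset (Fin n))) (p := fun i : Fin n => (i : ℕ) < f)
    rw [hcard_lt] at h1
    rw [Finset.card_univ, Fintype.card_fin] at h1
    omega
  have hcardPV : n < Multiset.card (projValues (imProfile n)
      (fun k : ℕ => min ((k : ℝ) * (s / (2 * n))) 1) j) := by
    rw [aux_card_projValues]; omega
  by_cases hj : (j : ℕ) = 0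
  · rw [if_pos hj]
    have hval : ∀ i : Fin n, imProfile n i j = if (i : ℕ) < f then (1:ℝ) else s - 1 := by
      intro i
      rw [hprofile i j, if_pos hj, if_pos hj]
    have hv_le : (Finset.univ.filter (fun i : Fin n => imProfile n i j ≤ s - 1))
        = Finset.univ.filter (fun i : Fin n => ¬ ((i : ℕ) < f)) := by
      apply Finset.filter_congr
      intro i _
      rw [hval i]
      by_cases hi : (i : ℕ) < f
      · rw [if_pos hi]
        constructor
        · intro h; linarith
        · intro h; exact absurd hi h
      · rw [if_neg hi]
        constructor
        · intro _; exact hi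
        · intro _; linarith
    have hv_lt : (Finset.univ.filter (fun i : Fin n => imProfile n i j < s - 1)) = ∅ := by
      apply Finset.filter_false_of_mem
      intro i _
      rw [hval i]
      by_cases hi : (i : ℕ) < f
      · rw [if_pos hi]; intro h; linarith
      · rw [if_neg hi]; exact lt_irrefl _
    apply le_antisymm
    · apply aux_medianAt_le hcardPV
      have hc : Multiset.countP (fun x => x ≤ s - 1)
          (projValues (imProfile n) (fun k : ℕ => min ((k : ℝ) * (s / (2 * n))) 1) j)
          = (Finset.univ.filter (fun i : Fin n => imProfile n i j ≤ s - 1)).card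
            + ((Finset.range (n + 1)).filter
                (fun k : ℕ => min ((k : ℝ) * (s / (2 * n))) 1 ≤ s - 1)).card :=
        aux_countP_projValues _ _ _ _
      rw [hc, hv_le, hcard_not, hph_le_a, Finset.card_range]
      omega
    · apply aux_le_medianAt hcardPV
      have hc : Multiset.countP (fun x => x < s - 1)
          (projValues (imProfile n) (fun k : ℕ => min ((k : ℝ) * (s / (2 * n))) 1) j)
          = (Finset.univ.filter (fun i : Fin n => imProfile n i j < s - 1)).card
            + ((Finset.range (n + 1)).filter
                (fun k : ℕ => min ((k : ℝ) * (s / (2 * n))) 1 < s - 1)).card :=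
        aux_countP_projValues _ _ _ _
      rw [hc, hv_lt, hph_lt_a, Finset.card_range, Finset.card_empty]
      omega
  · rw [if_neg hj]
    have hval : ∀ i : Fin n, imProfile n i j = if (i : ℕ) < f then (0:ℝ) else 1 - s / 2 := by
      intro i
      rw [hprofile i j, if_neg hj, if_neg hj]
    have hv_le : (Finset.univ.filter (fun i : Fin n => imProfile n i j ≤ 1 - s / 2))
        = Finset.univ := by
      apply Finset.filter_true_of_mem
      intro i _
      rw [hval i]
      by_cases hi : (i : ℕ) < f
      · rw [if_pos hi]; linarith
      · rw [if_neg hi]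
    have hv_lt : (Finset.univ.filter (fun i : Fin n => imProfile n i j < 1 - s / 2))
        = Finset.univ.filter (fun i : Fin n => (i : ℕ) < f) := by
      apply Finset.filter_congr
      intro i _
      rw [hval i]
      by_cases hi : (i : ℕ) < f
      · rw [if_pos hi]
        constructor
        · intro _; exact hi
        · intro _; linarith
      · rw [if_neg hi]
        constructor
        · intro h; exact absurd h (lt_irrefl _)
        · intro h; exact absurd h hi
    apply le_antisymm
    · apply aux_medianAt_le hcardPV
      have hc : Multiset.countP (fun x => x ≤ 1 - s / 2)
          (projValues (imProfile n) (fun k : ℕ => min ((k : ℝ) * (s / (2 * n))) 1) j)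
          = (Finset.univ.filter (fun i : Fin n => imProfile n i j ≤ 1 - s / 2)).card
            + ((Finset.range (n + 1)).filter
                (fun k : ℕ => min ((k : ℝ) * (s / (2 * n))) 1 ≤ 1 - s / 2)).card :=
        aux_countP_projValues _ _ _ _
      rw [hc, hv_le, Finset.card_univ, Fintype.card_fin, hph_le_b, Finset.card_range]
      omega
    · apply aux_le_medianAt hcardPV
      have hc : Multiset.countP (fun x => x < 1 - s / 2)
          (projValues (imProfile n) (fun k : ℕ => min ((k : ℝ) * (s / (2 * n))) 1) j)
          = (Finset.univ.filter (fun i : Fin n => imProfile n i j < 1 - s / 2)).card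
            + ((Finset.range (n + 1)).filter
                (fun k : ℕ => min ((k : ℝ) * (s / (2 * n))) 1 < 1 - s / 2)).card :=
        aux_countP_projValues _ _ _ _
      rw [hc, hv_lt, hcard_lt, hph_lt_b, Finset.card_range]
      omega

/-- For `n ≥ 2`, the Independent Markets mechanism outputs exactly
`x = (√2 - 1, 1 - √2/2, 1 - √2/2)` on the profile `imProfile n`; a feasible phantom
parameter is `t* = √2/(2n)`. -/
theorem independent_markets_output (n : ℕ) (hn : 2 ≤ n) :
    ((∑ j, phantomMedian (imProfile n)
        (fun k => min ((k : ℝ) * (Real.sqrt 2 / (2 * (n : ℝ)))) 1) j) = 1 ∧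
      ∀ j, phantomMedian (imProfile n)
          (fun k => min ((k : ℝ) * (Real.sqrt 2 / (2 * (n : ℝ)))) 1) j
        = (if (j : ℕ) = 0 then Real.sqrt 2 - 1 else 1 - Real.sqrt 2 / 2)) ∧
    ∀ w : Fin 3 → ℝ, IsIMOutcome (imProfile n) w →
      ∀ j, w j = (if (j : ℕ) = 0 then Real.sqrt 2 - 1 else 1 - Real.sqrt 2 / 2) := by
  have hx := aux_im_median_eq n hn
  have hsum1 : (∑ j : Fin 3, (if (j : ℕ) = 0 then Real.sqrt 2 - 1 else 1 - Real.sqrt 2 / 2)) = 1 := by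
    rw [Fin.sum_univ_three]
    norm_num
    ring
  have hsumt : (∑ j, phantomMedian (imProfile n)
      (fun k => min ((k : ℝ) * (Real.sqrt 2 / (2 * (n : ℝ)))) 1) j) = 1 := by
    rw [Finset.sum_congr rfl (fun j _ => hx j), hsum1]
  refine ⟨⟨hsumt, hx⟩, ?_⟩
  rintro w ⟨t, ht0, hsum, hw⟩ j
  rw [hw j]
  rcases le_total t (Real.sqrt 2 / (2 * (n : ℝ))) with hcase | hcase
  · have hmono : ∀ j' : Fin 3, phantomMedian (imProfile n) (fun k => min ((k : ℝ) * t) 1) j'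
        ≤ (if (j' : ℕ) = 0 then Real.sqrt 2 - 1 else 1 - Real.sqrt 2 / 2) := by
      intro j'
      rw [← hx j']
      apply aux_phantomMedian_mono
      intro k hk
      exact min_le_min (mul_le_mul_of_nonneg_left hcase (Nat.cast_nonneg k)) le_rfl
    have h0 : ∑ j' : Fin 3, ((if (j' : ℕ) = 0 then Real.sqrt 2 - 1 else 1 - Real.sqrt 2 / 2)
        - phantomMedian (imProfile n) (fun k => min ((k : ℝ) * t) 1) j') = 0 := by
      rw [Finset.sum_sub_distrib, hsum1, hsum]
      ring
    have hz := (Finset.sum_eq_zero_iff_of_nonneg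
      (fun j' _ => sub_nonneg.2 (hmono j'))).1 h0 j (Finset.mem_univ j)
    linarith [hz]
  · have hmono : ∀ j' : Fin 3, (if (j' : ℕ) = 0 then Real.sqrt 2 - 1 else 1 - Real.sqrt 2 / 2)
        ≤ phantomMedian (imProfile n) (fun k => min ((k : ℝ) * t) 1) j' := by
      intro j'
      rw [← hx j']
      apply aux_phantomMedian_mono
      intro k hk
      exact min_le_min (mul_le_mul_of_nonneg_left hcase (Nat.cast_nonneg k)) le_rfl
    have h0 : ∑ j' : Fin 3, (phantomMedian (imProfile n) (fun k => min ((k : ℝ) * t) 1) j'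
        - (if (j' : ℕ) = 0 then Real.sqrt 2 - 1 else 1 - Real.sqrt 2 / 2)) = 0 := by
      rw [Finset.sum_sub_distrib, hsum1, hsum]
      ring
    have hz := (Finset.sum_eq_zero_iff_of_nonneg
      (fun j' _ => sub_nonneg.2 (hmono j'))).1 h0 j (Finset.mem_univ j)
    linarith [hz]
end

section
/- For every m ≥ 8 there is a preference profile on which the Piecewise Uniform mechanism has ℓ1-loss at least 2 − 8/m^{1/3}. Concretely, set z = ⌊m − m^{2/3}⌋ and a = (m − z)^2, and consider the profile with m voters over m projects where, for i = 1,…,z, voter i proposes the single-minded division with 1 on project i, and each of the remaining m − z voters proposes the division x with x_j = 1/(a+z) for j ≤ z and x_j = (m−z)/(a+z) for j > z; the Piecewise Uniform mechanism outputs x on this profile, and the resulting loss equals 2·(a/(a+z))·(z/m) ≥ 2 − 8/m^{1/3}. -/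
open Finset

/-- `z = ⌊m - m^(2/3)⌋`. -/
noncomputable def zLB (m : ℕ) : ℕ := Nat.floor ((m : ℝ) - (m : ℝ) ^ ((2 : ℝ) / 3))

/-- `a = (m - z)²`. -/
noncomputable def aLB (m : ℕ) : ℕ := (m - zLB m) ^ 2

/-- The target division: `1/(a+z)` on the first `z` projects and `(m-z)/(a+z)` on the
remaining `m - z` projects. -/
noncomputable def xLB (m : ℕ) : Fin m → ℝ :=
  fun j => if (j : ℕ) < zLB m then 1 / ((aLB m : ℝ) + (zLB m : ℝ))
    else ((m : ℝ) - (zLB m : ℝ)) / ((aLB m : ℝ) + (zLB m : ℝ))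

/-- The lower-bound profile with `m` voters over `m` projects: voter `i < z` is
single-minded toward project `i`; the remaining `m - z` voters propose `xLB m`. -/
noncomputable def lbProfile (m : ℕ) : Fin m → Fin m → ℝ :=
  fun i j => if (i : ℕ) < zLB m then (if j = i then 1 else 0) else xLB m j

namespace PUaux

lemma le_medianAt {s : Multiset ℝ} {n : ℕ} {v : ℝ}
    (hn : n < Multiset.card s) (h : s.countP (fun a => a < v) ≤ n) :
    v ≤ medianAt s n := by
  by_contra hlt
  push_neg at hlt
  set l := s.sort (· ≤ ·) with hl
  have hlen : l.length = Multiset.card s := Multiset.length_sort _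
  have hnl : n < l.length := by omega
  have hmed : medianAt s n = l[n] := List.getD_eq_getElem l 0 hnl
  have hsorted : l.Pairwise (· ≤ ·) := Multiset.pairwise_sort s _
  have hall : ∀ a ∈ l.take (n+1), a < v := by
    intro a ha
    rw [List.mem_iff_getElem] at ha
    obtain ⟨i, hi, rfl⟩ := ha
    have hi' : i < l.length := lt_of_lt_of_le hi (List.length_take_le _ _) |>.trans_le (le_refl _) |> fun _ => by
      have : (l.take (n+1)).length = min (n+1) l.length := List.length_take
      omega
    have h1 : (l.take (n+1))[i] = l[i] := List.getElem_take
    have hin : i ≤ n := by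
      have : (l.take (n+1)).length = min (n+1) l.length := List.length_take
      omega
    have h2 : l[i] ≤ l[n] := by
      have := hsorted.rel_get_of_le (a := ⟨i, hi'⟩) (b := ⟨n, hnl⟩) (by simpa using hin)
      simpa [List.get_eq_getElem] using this
    rw [h1]
    exact lt_of_le_of_lt h2 (by rw [← hmed]; exact hlt)
  have hcnt : n + 1 ≤ s.countP (fun a => a < v) := by
    have hs : (↑l : Multiset ℝ) = s := Multiset.sort_eq s _
    rw [← hs, Multiset.coe_countP]
    have hsplit : l = l.take (n+1) ++ l.drop (n+1) := (List.take_append_drop _ _).symm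
    rw [hsplit, List.countP_append]
    have : (l.take (n+1)).countP (fun a => decide (a < v)) = (l.take (n+1)).length :=
      List.countP_eq_length.2 (by intro a ha; simpa using hall a ha)
    rw [this]
    have : (l.take (n+1)).length = n+1 := by
      rw [List.length_take]; omega
    omega
  omega

lemma medianAt_le {s : Multiset ℝ} {n : ℕ} {v : ℝ}
    (hn : n < Multiset.card s) (h : n + 1 ≤ s.countP (fun a => a ≤ v)) :
    medianAt s n ≤ v := by
  by_contra hlt
  push_neg at hlt
  set l := s.sort (· ≤ ·) with hl
  have hlen : l.length = Multiset.card s := Multiset.length_sort _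
  have hnl : n < l.length := by omega
  have hmed : medianAt s n = l[n] := List.getD_eq_getElem l 0 hnl
  have hsorted : l.Pairwise (· ≤ ·) := Multiset.pairwise_sort s _
  have hdrop : ∀ a ∈ l.drop n, ¬ (a ≤ v) := by
    intro a ha
    rw [List.mem_iff_getElem] at ha
    obtain ⟨i, hi, rfl⟩ := ha
    have hlen' : (l.drop n).length = l.length - n := List.length_drop
    have hni : n + i < l.length := by omega
    have h1 : (l.drop n)[i] = l[n+i] := List.getElem_drop
    have h2 : l[n] ≤ l[n+i] := by
      have := hsorted.rel_get_of_le (a := ⟨n, hnl⟩) (b := ⟨n+i, hni⟩) (by simp)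
      simpa [List.get_eq_getElem] using this
    rw [h1]
    push_neg
    exact lt_of_lt_of_le (by rw [← hmed]; exact hlt) h2
  have hcnt : s.countP (fun a => a ≤ v) ≤ n := by
    have hs : (↑l : Multiset ℝ) = s := Multiset.sort_eq s _
    rw [← hs, Multiset.coe_countP]
    have hsplit : l = l.take n ++ l.drop n := (List.take_append_drop _ _).symm
    rw [hsplit, List.countP_append]
    have h0 : (l.drop n).countP (fun a => decide (a ≤ v)) = 0 := by
      rw [List.countP_eq_zero]
      intro a ha
      simpa using hdrop a (by simpa using ha)
    have h1 : (l.take n).countP (fun a => decide (a ≤ v)) ≤ n := by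
      calc (l.take n).countP _ ≤ (l.take n).length := List.countP_le_length
        _ ≤ n := by rw [List.length_take]; omega
    omega
  omega

lemma countP_map_fs {α : Type*} (s : Finset α) (f : α → ℝ) (p : ℝ → Prop) [DecidablePred p] :
    (Multiset.map f s.val).countP p = (s.filter (fun i => p (f i))).card := by
  rw [Multiset.countP_map]
  rfl

lemma card_filter_lt_fin {m z : ℕ} (hz : z ≤ m) :
    (univ.filter (fun i : Fin m => (i:ℕ) < z)).card = z := by
  have h : ∀ x ∈ range z, x < m := fun x hx => lt_of_lt_of_le (mem_range.mp hx) hz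
  rw [show (univ.filter (fun i : Fin m => (i:ℕ) < z)) = (range z).attachFin h from by
    ext i; simp [Finset.mem_attachFin]]
  rw [Finset.card_attachFin, Finset.card_range]
section
variable {m : ℕ}


lemma pu_mono_aux {u t₁ t₂ : ℝ} (hu0 : 0 ≤ u) (hu1 : u ≤ 1) (h0 : 0 ≤ t₁)
    (h12 : t₁ ≤ t₂) (h1 : t₂ ≤ 1) :
    (if t₁ < 1/2 then (if u < 1/2 then (0:ℝ) else 4*t₁*u - 2*t₁)
      else (if u < 1/2 then u*(2*t₁-1) else u*(3-2*t₁) - 2 + 2*t₁))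
    ≤ (if t₂ < 1/2 then (if u < 1/2 then (0:ℝ) else 4*t₂*u - 2*t₂)
      else (if u < 1/2 then u*(2*t₂-1) else u*(3-2*t₂) - 2 + 2*t₂)) := by
  split_ifs with ha hb hc hd he hf hg
  · exact le_refl _
  · exact mul_nonneg hu0 (by linarith)
  · nlinarith [(mul_nonneg (by linarith : (0:ℝ) ≤ t₂ - t₁) (by linarith : (0:ℝ) ≤ 4*u-2))]
  · nlinarith [(mul_nonneg (by linarith : (0:ℝ) ≤ 1 - 2*t₁) (by linarith : (0:ℝ) ≤ 2*u-1)),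
      (mul_nonneg (by linarith : (0:ℝ) ≤ 2*t₂ - 1) (by linarith : (0:ℝ) ≤ 1 - u))]
  · linarith
  · nlinarith [(mul_nonneg hu0 (by linarith : (0:ℝ) ≤ 2*t₂ - 2*t₁))]
  · linarith
  · nlinarith [(mul_nonneg (by linarith : (0:ℝ) ≤ t₂ - t₁) (by linarith : (0:ℝ) ≤ 2 - 2*u))]

lemma puPhantom_eq_aux (n k : ℕ) (t : ℝ) :
    puPhantom n k t =
    (if t < 1/2 then (if (k:ℝ)/(n:ℝ) < 1/2 then (0:ℝ) else 4*t*((k:ℝ)/(n:ℝ)) - 2*t)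
      else (if (k:ℝ)/(n:ℝ) < 1/2 then ((k:ℝ)/(n:ℝ))*(2*t-1)
        else ((k:ℝ)/(n:ℝ))*(3-2*t) - 2 + 2*t)) := by
  unfold puPhantom
  split_ifs <;> ring

lemma puPhantom_mono {n k : ℕ} (hn : 0 < n) (hk : k ≤ n) {t₁ t₂ : ℝ}
    (h0 : 0 ≤ t₁) (h12 : t₁ ≤ t₂) (h1 : t₂ ≤ 1) :
    puPhantom n k t₁ ≤ puPhantom n k t₂ := by
  rw [puPhantom_eq_aux, puPhantom_eq_aux]
  have hn0 : (0:ℝ) < n := by exact_mod_cast hn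
  exact pu_mono_aux (by positivity) (by
    rw [div_le_one hn0]; exact_mod_cast hk) h0 h12 h1



noncomputable def Ar (m : ℕ) : ℝ := ((aLB m : ℕ) : ℝ) + (zLB m : ℝ)
noncomputable def tstar (m : ℕ) : ℝ := 1/2 + (m : ℝ) / (2 * Ar m)

lemma c_cube (m : ℕ) : ((m:ℝ)^((2:ℝ)/3))^3 = (m:ℝ)^2 := by
  rw [← Real.rpow_natCast ((m:ℝ)^((2:ℝ)/3)) 3, ← Real.rpow_mul (by positivity),
      show ((2:ℝ)/3 * ((3:ℕ):ℝ)) = ((2:ℕ):ℝ) by push_cast; ring, Real.rpow_natCast]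

lemma c_le_half (hm : 8 ≤ m) : (m:ℝ)^((2:ℝ)/3) ≤ (m:ℝ)/2 := by
  have hm' : (8:ℝ) ≤ m := by exact_mod_cast hm
  by_contra h
  push_neg at h
  have h3 : ((m:ℝ)/2)^3 < ((m:ℝ)^((2:ℝ)/3))^3 := by
    apply pow_lt_pow_left₀ h (by positivity)
    norm_num
  rw [c_cube] at h3
  nlinarith

lemma four_le_c (hm : 8 ≤ m) : (4:ℝ) ≤ (m:ℝ)^((2:ℝ)/3) := by
  have hm' : (8:ℝ) ≤ m := by exact_mod_cast hm
  by_contra h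
  push_neg at h
  have h3 : ((m:ℝ)^((2:ℝ)/3))^3 < 4^3 := by
    apply pow_lt_pow_left₀ h (by positivity)
    norm_num
  rw [c_cube] at h3
  nlinarith

lemma z_le (hm : 8 ≤ m) : zLB m ≤ m := by
  have : zLB m ≤ Nat.floor ((m:ℝ)) := by
    apply Nat.floor_le_floor
    have : (0:ℝ) ≤ (m:ℝ)^((2:ℝ)/3) := by positivity
    linarith
  simpa using this

lemma z_half (hm : 8 ≤ m) : m/2 ≤ zLB m := by
  apply Nat.le_floor
  have h1 : ((m/2 : ℕ):ℝ) ≤ (m:ℝ)/2 := Nat.cast_div_le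
  have := c_le_half hm
  push_cast at h1 ⊢
  linarith

lemma z_cast_le (hm : 8 ≤ m) : (zLB m : ℝ) ≤ (m:ℝ) - (m:ℝ)^((2:ℝ)/3) := by
  apply Nat.floor_le
  have h1 := c_le_half hm
  have hm' : (8:ℝ) ≤ m := by exact_mod_cast hm
  linarith

lemma z_cast_gt (hm : 8 ≤ m) : (m:ℝ) - (m:ℝ)^((2:ℝ)/3) < (zLB m : ℝ) + 1 :=
  Nat.lt_floor_add_one _

lemma d4 (hm : 8 ≤ m) : 4 ≤ m - zLB m := by
  have h1 := four_le_c hm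
  have h2 := z_cast_le hm
  have h3 := z_le hm
  have : (4:ℝ) ≤ ((m - zLB m : ℕ):ℝ) := by
    rw [Nat.cast_sub h3]; linarith
  exact_mod_cast this

lemma two_d (hm : 8 ≤ m) : 2*(m - zLB m) ≤ m + 1 := by
  have h1 := z_half hm
  have h2 := z_le hm
  omega

lemma d_cast (hm : 8 ≤ m) : ((m - zLB m : ℕ):ℝ) = (m:ℝ) - (zLB m : ℝ) :=
  Nat.cast_sub (z_le hm)

lemma c_le_d (hm : 8 ≤ m) : (m:ℝ)^((2:ℝ)/3) ≤ ((m - zLB m : ℕ):ℝ) := by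
  rw [d_cast hm]; linarith [z_cast_le hm]

lemma d_le_c1 (hm : 8 ≤ m) : ((m - zLB m : ℕ):ℝ) ≤ (m:ℝ)^((2:ℝ)/3) + 1 := by
  rw [d_cast hm]; linarith [z_cast_gt hm]

lemma A_eq (m : ℕ) : Ar m = ((m - zLB m : ℕ):ℝ)^2 + (zLB m : ℝ) := by
  rw [Ar, aLB]; push_cast; ring

lemma A_pos (hm : 8 ≤ m) : 0 < Ar m := by
  rw [A_eq]
  have h4 : (4:ℝ) ≤ ((m - zLB m : ℕ):ℝ) := by exact_mod_cast d4 hm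
  nlinarith [(Nat.cast_nonneg (zLB m) : (0:ℝ) ≤ (zLB m:ℝ))]

lemma m_le_A (hm : 8 ≤ m) : (m:ℝ) ≤ Ar m := by
  rw [A_eq]
  have h4 : (4:ℝ) ≤ ((m - zLB m : ℕ):ℝ) := by exact_mod_cast d4 hm
  have hd := d_cast hm
  nlinarith

lemma tstar_mem : 8 ≤ m → tstar m ∈ Set.Icc (0:ℝ) 1 := by
  intro hm
  have hA := A_pos hm
  have hmA := m_le_A hm
  have hm0 : (0:ℝ) < m := by positivity
  constructor
  · have : 0 ≤ (m:ℝ)/(2*Ar m) := by positivity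
    rw [tstar]; linarith
  · rw [tstar]
    have : (m:ℝ)/(2*Ar m) ≤ 1/2 := by
      rw [div_le_div_iff₀ (by linarith) (by norm_num)]
      linarith
    linarith

lemma tstar_not_lt : 8 ≤ m → ¬ (tstar m < 1/2) := by
  intro hm
  have hA := A_pos hm
  have hm0 : (0:ℝ) < m := by positivity
  have : 0 < (m:ℝ)/(2*Ar m) := by positivity
  rw [tstar]; push_neg; linarith


lemma pstar_eq (hm : 8 ≤ m) (k : ℕ) :
    puPhantom m k (tstar m) =
    if (k:ℝ)/(m:ℝ) < 1/2 then (k:ℝ)/Ar m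
    else ((2*(k:ℝ) - m)/m + ((m:ℝ) - k)/Ar m) := by
  have hA := A_pos hm
  have hm0 : (0:ℝ) < m := by
    have : (8:ℝ) ≤ m := by exact_mod_cast hm
    linarith
  rw [puPhantom, if_neg (tstar_not_lt hm), tstar]
  split_ifs with h
  · field_simp
    ring
  · field_simp
    ring

lemma pstar_zero (hm : 8 ≤ m) : puPhantom m 0 (tstar m) = 0 := by
  rw [pstar_eq hm 0]
  norm_num

lemma pstar_one (hm : 8 ≤ m) : puPhantom m 1 (tstar m) = 1 / Ar m := by
  have hm0 : (0:ℝ) < m := by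
    have : (8:ℝ) ≤ m := by exact_mod_cast hm
    linarith
  rw [pstar_eq hm 1, if_pos]
  · norm_num
  · rw [div_lt_iff₀ hm0]
    have : (8:ℝ) ≤ m := by exact_mod_cast hm
    norm_num
    linarith

lemma pstar_ge_v1 (hm : 8 ≤ m) {k : ℕ} (h1 : 1 ≤ k) (hk : k ≤ m) :
    1 / Ar m ≤ puPhantom m k (tstar m) := by
  have hA := A_pos hm
  have hm0 : (0:ℝ) < m := by
    have : (8:ℝ) ≤ m := by exact_mod_cast hm
    linarith
  have hmA := m_le_A hm
  have hm8 : (8:ℝ) ≤ m := by exact_mod_cast hm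
  rw [pstar_eq hm k]
  split_ifs with h
  · gcongr
    exact_mod_cast h1
  · have h2k : (m:ℝ) ≤ 2*k := by
      push_neg at h
      rw [le_div_iff₀ hm0] at h
      linarith
    rcases eq_or_lt_of_le hk with heq | hlt
    · rw [show ((k:ℝ)) = m by exact_mod_cast heq,
        show 2*(m:ℝ)-m = m by ring, div_self hm0.ne', sub_self, zero_div, add_zero,
        div_le_one hA]
      linarith
    · have hk1 : (k:ℝ) + 1 ≤ m := by exact_mod_cast hlt
      have t1 : 1/Ar m ≤ ((m:ℝ)-k)/Ar m := by
        gcongr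
        linarith
      have t2 : 0 ≤ (2*(k:ℝ)-m)/m := div_nonneg (by linarith) hm0.le
      linarith

lemma pstar_ge_v2 (hm : 8 ≤ m) {k : ℕ} (hdk : m - zLB m ≤ k) (hk : k ≤ m) :
    ((m - zLB m : ℕ):ℝ) / Ar m ≤ puPhantom m k (tstar m) := by
  have hA := A_pos hm
  have hm8 : (8:ℝ) ≤ m := by exact_mod_cast hm
  have hm0 : (0:ℝ) < m := by linarith
  set D : ℝ := ((m - zLB m : ℕ):ℝ) with hD
  have h4 : (4:ℝ) ≤ D := by rw [hD]; exact_mod_cast d4 hm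
  have h2d : 2*D ≤ (m:ℝ)+1 := by
    have := two_d hm
    have : ((2*(m - zLB m):ℕ):ℝ) ≤ ((m+1:ℕ):ℝ) := by exact_mod_cast this
    push_cast at this
    linarith
  have hz : (zLB m : ℝ) = (m:ℝ) - D := by
    rw [hD, d_cast hm]; ring
  have hAeq : Ar m = D^2 + ((m:ℝ) - D) := by rw [A_eq, hz]
  have hDk : D ≤ (k:ℝ) := by rw [hD]; exact_mod_cast hdk
  rw [pstar_eq hm k]
  split_ifs with h
  · gcongr
  · have h2k : (m:ℝ) ≤ 2*k := by
      push_neg at h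
      rw [le_div_iff₀ hm0] at h
      linarith
    by_cases hc : (k:ℝ) + D ≤ m
    · have t1 : D/Ar m ≤ ((m:ℝ)-k)/Ar m := by gcongr; linarith
      have t2 : 0 ≤ (2*(k:ℝ)-m)/m := div_nonneg (by linarith) hm0.le
      linarith
    · push_neg at hc
      have hnat : m < k + (m - zLB m) := by
        have h' : (m:ℝ) < (k:ℝ) + ((m - zLB m:ℕ):ℝ) := by rw [← hD]; exact hc
        exact_mod_cast h'
      have hk1 : (m:ℝ) - D + 1 ≤ k := by
        have h' : m + 1 ≤ k + (m - zLB m) := hnat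
        have h'' : (m:ℝ) + 1 ≤ (k:ℝ) + ((m - zLB m:ℕ):ℝ) := by exact_mod_cast h'
        rw [← hD] at h''
        linarith
      have key : D * (m:ℝ) ≤ (2*(k:ℝ) - m)*Ar m + ((m:ℝ) - k)*m := by
        rw [hAeq]
        have p1 : (0:ℝ) ≤ ((m:ℝ) - 2*D + 1)*(D^2 + m - D) :=
          mul_nonneg (by linarith) (by nlinarith)
        have p2 : (0:ℝ) ≤ (2*D^2 + m - 2*D)*((k:ℝ) - ((m:ℝ) - D + 1)) :=
          mul_nonneg (by nlinarith) (by linarith)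
        have p3 : (0:ℝ) ≤ D^2 - D := by nlinarith
        nlinarith [p1, p2, p3]
      rw [div_add_div _ _ hm0.ne' hA.ne', div_le_div_iff₀ hA (by positivity)]
      nlinarith [mul_le_mul_of_nonneg_right key hA.le]

lemma xLB_lt (hm : 8 ≤ m) {j : Fin m} (hj : (j:ℕ) < zLB m) : xLB m j = 1 / Ar m := by
  simp only [xLB, if_pos hj, Ar]

lemma xLB_ge (hm : 8 ≤ m) {j : Fin m} (hj : ¬ (j:ℕ) < zLB m) :
    xLB m j = ((m - zLB m : ℕ):ℝ) / Ar m := by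
  simp only [xLB, if_neg hj, Ar, d_cast hm]

lemma v1_lt_one (hm : 8 ≤ m) : 1 / Ar m < 1 := by
  rw [div_lt_one (A_pos hm)]
  have := m_le_A hm
  have h8 : (8:ℝ) ≤ m := by exact_mod_cast hm
  linarith

lemma card_proj (V : Fin m → Fin m → ℝ) (p : ℕ → ℝ) (j : Fin m) :
    Multiset.card (projValues V p j) = 2*m + 1 := by
  rw [projValues, Multiset.card_add, Multiset.card_map, Multiset.card_map]
  have h1 : Multiset.card (Finset.univ.val : Multiset (Fin m)) = m := by
    rw [← Finset.card_def, Finset.card_univ, Fintype.card_fin]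
  have h2 : Multiset.card (range (m+1)).val = m+1 := by
    rw [← Finset.card_def, Finset.card_range]
  omega

lemma countP_lt_le (hm : 8 ≤ m) {t : ℝ} (ht : tstar m ≤ t) (ht1 : t ≤ 1) (j : Fin m) :
    (projValues (lbProfile m) (fun k => puPhantom m k t) j).countP
      (fun a => a < xLB m j) ≤ m := by
  have hz := z_le hm
  have hA := A_pos hm
  have hts := tstar_mem hm
  rw [projValues, Multiset.countP_add, countP_map_fs, countP_map_fs]
  have hmono : ((range (m+1)).filter (fun k => puPhantom m k t < xLB m j)) ⊆
      ((range (m+1)).filter (fun k => puPhantom m k (tstar m) < xLB m j)) := by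
    intro k hk
    rw [mem_filter, mem_range] at hk ⊢
    refine ⟨hk.1, lt_of_le_of_lt ?_ hk.2⟩
    exact puPhantom_mono (by omega) (by omega : k ≤ m) hts.1 ht ht1
  by_cases hj : (j:ℕ) < zLB m
  · have hx := xLB_lt hm hj
    have h1 : (univ.filter (fun i : Fin m => lbProfile m i j < xLB m j)) ⊆
        (univ.filter (fun i : Fin m => (i:ℕ) < zLB m)).erase j := by
      intro i hi
      rw [Finset.mem_filter] at hi
      have hi2 := hi.2
      rw [Finset.mem_erase, Finset.mem_filter]
      by_cases hiz : (i:ℕ) < zLB m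
      · refine ⟨?_, Finset.mem_univ i, hiz⟩
        rintro rfl
        simp only [lbProfile, if_pos hiz, if_pos rfl, if_true] at hi2
        norm_num at hi2
        rw [hx] at hi2
        linarith [v1_lt_one hm]
      · exfalso
        simp only [lbProfile, if_neg hiz] at hi2
        exact lt_irrefl _ hi2
    have h2 : ((range (m+1)).filter (fun k => puPhantom m k (tstar m) < xLB m j)) ⊆ {0} := by
      intro k hk
      rw [mem_filter, mem_range] at hk
      rw [Finset.mem_singleton]
      by_contra hk0
      have h1k : 1 ≤ k := by omega
      have := pstar_ge_v1 hm h1k (by omega : k ≤ m)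
      rw [hx] at hk
      linarith [hk.2]
    have c1 : (univ.filter (fun i : Fin m => lbProfile m i j < xLB m j)).card ≤ zLB m - 1 := by
      refine le_trans (Finset.card_le_card h1) ?_
      rw [Finset.card_erase_of_mem (by rw [Finset.mem_filter]; exact ⟨Finset.mem_univ _, hj⟩),
        card_filter_lt_fin hz]
    have c2 := Finset.card_le_card (hmono.trans h2)
    rw [Finset.card_singleton] at c2
    have hz1 : 1 ≤ zLB m := by
      have := z_half hm; omega
    omega
  · have hx := xLB_ge hm hj
    have h1 : (univ.filter (fun i : Fin m => lbProfile m i j < xLB m j)) ⊆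
        (univ.filter (fun i : Fin m => (i:ℕ) < zLB m)) := by
      intro i hi
      rw [Finset.mem_filter] at hi ⊢
      refine ⟨hi.1, ?_⟩
      by_contra hiz
      have hi2 := hi.2
      simp only [lbProfile, if_neg hiz] at hi2
      exact lt_irrefl _ hi2
    have h2 : ((range (m+1)).filter (fun k => puPhantom m k (tstar m) < xLB m j)) ⊆
        range (m - zLB m) := by
      intro k hk
      rw [mem_filter, mem_range] at hk
      rw [mem_range]
      by_contra hk0
      push_neg at hk0
      have := pstar_ge_v2 hm hk0 (by omega : k ≤ m)
      rw [hx] at hk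
      linarith [hk.2]
    have c1 := Finset.card_le_card h1
    rw [card_filter_lt_fin hz] at c1
    have c2 := Finset.card_le_card (hmono.trans h2)
    rw [Finset.card_range] at c2
    omega

lemma countP_le_ge (hm : 8 ≤ m) {t : ℝ} (ht0 : 0 ≤ t) (ht : t ≤ tstar m) (j : Fin m) :
    m + 1 ≤ (projValues (lbProfile m) (fun k => puPhantom m k t) j).countP
      (fun a => a ≤ xLB m j) := by
  have hz := z_le hm
  have hA := A_pos hm
  have hts := tstar_mem hm
  rw [projValues, Multiset.countP_add, countP_map_fs, countP_map_fs]
  have hmono : ∀ k, k ≤ m → puPhantom m k t ≤ puPhantom m k (tstar m) :=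
    fun k hk => puPhantom_mono (by omega) hk ht0 ht hts.2
  by_cases hj : (j:ℕ) < zLB m
  · have hx := xLB_lt hm hj
    have h1 : univ.erase j ⊆ (univ.filter (fun i : Fin m => lbProfile m i j ≤ xLB m j)) := by
      intro i hi
      rw [Finset.mem_erase] at hi
      rw [Finset.mem_filter]
      refine ⟨Finset.mem_univ _, ?_⟩
      by_cases hiz : (i:ℕ) < zLB m
      · simp only [lbProfile, if_pos hiz, if_neg (fun h : j = i => hi.1 h.symm)]
        rw [hx]
        exact div_nonneg zero_le_one hA.le
      · simp only [lbProfile, if_neg hiz]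
        exact le_rfl
    have h2 : ({0,1} : Finset ℕ) ⊆ ((range (m+1)).filter (fun k => puPhantom m k t ≤ xLB m j)) := by
      intro k hk
      rw [Finset.mem_insert, Finset.mem_singleton] at hk
      rw [mem_filter, mem_range]
      rcases hk with rfl | rfl
      · exact ⟨by omega, le_trans (hmono 0 (by omega))
          (by rw [pstar_zero hm, hx]; exact div_nonneg zero_le_one hA.le)⟩
      · exact ⟨by omega, le_trans (hmono 1 (by omega)) (by rw [pstar_one hm, hx])⟩
    have c1 := Finset.card_le_card h1
    rw [Finset.card_erase_of_mem (Finset.mem_univ j), Finset.card_univ, Fintype.card_fin] at c1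
    have c2 := Finset.card_le_card h2
    have hcard01 : ({0,1}:Finset ℕ).card = 2 := by decide
    rw [hcard01] at c2
    omega
  · have hx := xLB_ge hm hj
    have h1 : (univ : Finset (Fin m)) ⊆ (univ.filter (fun i : Fin m => lbProfile m i j ≤ xLB m j)) := by
      intro i _
      rw [Finset.mem_filter]
      refine ⟨Finset.mem_univ _, ?_⟩
      by_cases hiz : (i:ℕ) < zLB m
      · have hij : ¬ (j = i) := by
          rintro rfl; exact hj hiz
        simp only [lbProfile, if_pos hiz, if_neg hij]
        rw [hx]
        exact div_nonneg (Nat.cast_nonneg _) hA.le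
      · simp only [lbProfile, if_neg hiz]
        exact le_rfl
    have h2 : ({0} : Finset ℕ) ⊆ ((range (m+1)).filter (fun k => puPhantom m k t ≤ xLB m j)) := by
      intro k hk
      rw [Finset.mem_singleton] at hk
      subst hk
      rw [mem_filter, mem_range]
      exact ⟨by omega, le_trans (hmono 0 (by omega))
        (by rw [pstar_zero hm, hx]; exact div_nonneg (Nat.cast_nonneg _) hA.le)⟩
    have c1 := Finset.card_le_card h1
    rw [Finset.card_univ, Fintype.card_fin] at c1
    have c2 := Finset.card_le_card h2
    rw [Finset.card_singleton] at c2
    omega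

lemma median_le (hm : 8 ≤ m) {t : ℝ} (ht0 : 0 ≤ t) (ht : t ≤ tstar m) (j : Fin m) :
    phantomMedian (lbProfile m) (fun k => puPhantom m k t) j ≤ xLB m j := by
  apply medianAt_le
  · rw [card_proj]; omega
  · exact countP_le_ge hm ht0 ht j

lemma median_ge (hm : 8 ≤ m) {t : ℝ} (ht : tstar m ≤ t) (ht1 : t ≤ 1) (j : Fin m) :
    xLB m j ≤ phantomMedian (lbProfile m) (fun k => puPhantom m k t) j := by
  apply le_medianAt
  · rw [card_proj]; omega
  · exact countP_lt_le hm ht ht1 j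

lemma median_eq (hm : 8 ≤ m) (j : Fin m) :
    phantomMedian (lbProfile m) (fun k => puPhantom m k (tstar m)) j = xLB m j :=
  le_antisymm (median_le hm (tstar_mem hm).1 le_rfl j) (median_ge hm le_rfl (tstar_mem hm).2 j)

lemma card_filter_not_lt (hm : 8 ≤ m) :
    (univ.filter (fun i : Fin m => ¬ (i:ℕ) < zLB m)).card = m - zLB m := by
  have h := Finset.card_filter_add_card_filter_not
    (s := (univ : Finset (Fin m))) (p := fun i : Fin m => (i:ℕ) < zLB m)
  rw [Finset.card_univ, Fintype.card_fin, card_filter_lt_fin (z_le hm)] at h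
  omega

lemma a_cast (hm : 8 ≤ m) : ((aLB m):ℝ) = ((m:ℝ) - zLB m)^2 := by
  rw [aLB]
  push_cast [d_cast hm]
  ring

lemma sum_xLB (hm : 8 ≤ m) : ∑ j : Fin m, xLB m j = 1 := by
  have hz := z_le hm
  have hA := A_pos hm
  have hA0 : ((aLB m):ℝ) + (zLB m:ℝ) ≠ 0 := by
    have : Ar m = ((aLB m):ℝ) + (zLB m:ℝ) := rfl
    rw [← this]; exact hA.ne'
  simp only [xLB]
  rw [Finset.sum_ite, Finset.sum_const, Finset.sum_const, card_filter_lt_fin hz,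
    card_filter_not_lt hm, nsmul_eq_mul, nsmul_eq_mul, d_cast hm]
  field_simp
  rw [a_cast hm]
  ring

lemma sum_col (hm : 8 ≤ m) (j : Fin m) :
    ∑ i : Fin m, lbProfile m i j =
      (if (j:ℕ) < zLB m then 1 else 0) + ((m:ℝ) - zLB m) * xLB m j := by
  simp only [lbProfile]
  rw [Finset.sum_ite, Finset.sum_const, Finset.sum_ite_eq, card_filter_not_lt hm,
    nsmul_eq_mul, d_cast hm]
  congr 1
  simp [Finset.mem_filter]

lemma loss_eq (hm : 8 ≤ m) :
    l1 (xLB m) (propDiv (lbProfile m)) =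
      2 * ((aLB m : ℝ) / ((aLB m : ℝ) + (zLB m : ℝ))) * ((zLB m : ℝ) / (m : ℝ)) := by
  have hA := A_pos hm
  have hz := z_le hm
  have hm8 : (8:ℝ) ≤ m := by exact_mod_cast hm
  have hm0 : (0:ℝ) < m := by linarith
  have hzZ : (zLB m:ℝ) ≤ m := by exact_mod_cast hz
  have hZ0 : (0:ℝ) ≤ (zLB m:ℝ) := Nat.cast_nonneg _
  have hArE : Ar m = ((m:ℝ) - zLB m)^2 + zLB m := by rw [A_eq, d_cast hm]
  have h0 : ((m:ℝ) - zLB m)^2 + (zLB m:ℝ) ≠ 0 := by rw [← hArE]; exact hA.ne'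
  have hterm : ∀ j : Fin m, |xLB m j - propDiv (lbProfile m) j| =
      if (j:ℕ) < zLB m then ((aLB m):ℝ)/(Ar m * m)
      else ((((m:ℝ) - zLB m) * zLB m))/(Ar m * m) := by
    intro j
    rw [propDiv, sum_col hm j]
    by_cases hj : (j:ℕ) < zLB m
    · rw [if_pos hj, if_pos hj, xLB_lt hm hj]
      have heq : 1/Ar m - (1 + ((m:ℝ) - zLB m) * (1/Ar m))/m = -(((aLB m):ℝ)/(Ar m * m)) := by
        rw [a_cast hm, hArE]
        field_simp
        try ring
      rw [heq, abs_neg, abs_of_nonneg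
        (div_nonneg (Nat.cast_nonneg _) (mul_pos hA hm0).le)]
    · rw [if_neg hj, if_neg hj, xLB_ge hm hj, d_cast hm]
      have heq : ((m:ℝ) - zLB m)/Ar m - (0 + ((m:ℝ) - zLB m) * (((m:ℝ) - zLB m)/Ar m))/m
          = (((m:ℝ) - zLB m) * zLB m)/(Ar m * m) := by
        rw [hArE]
        field_simp
        try ring
      rw [heq, abs_of_nonneg
        (div_nonneg (mul_nonneg (by linarith) hZ0) (mul_pos hA hm0).le)]
  rw [l1, Finset.sum_congr rfl (fun j _ => hterm j), Finset.sum_ite, Finset.sum_const,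
    Finset.sum_const, card_filter_lt_fin hz, card_filter_not_lt hm, nsmul_eq_mul,
    nsmul_eq_mul, d_cast hm]
  have hArE' : ((aLB m):ℝ) + (zLB m:ℝ) = Ar m := rfl
  rw [hArE', a_cast hm, hArE]
  field_simp
  ring

lemma final_ineq (hm : 8 ≤ m) :
    2 - 8 / (m:ℝ) ^ ((1:ℝ)/3) ≤
      2 * ((aLB m : ℝ) / ((aLB m : ℝ) + (zLB m : ℝ))) * ((zLB m : ℝ) / (m : ℝ)) := by
  have hA := A_pos hm
  have hm8 : (8:ℝ) ≤ m := by exact_mod_cast hm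
  have hm0 : (0:ℝ) < m := by linarith
  set D : ℝ := ((m - zLB m : ℕ):ℝ) with hD
  have hD4 : (4:ℝ) ≤ D := by rw [hD]; exact_mod_cast d4 hm
  have hDm : D ≤ m := by
    rw [hD]
    exact_mod_cast Nat.sub_le m (zLB m)
  have hzD : (zLB m : ℝ) = (m:ℝ) - D := by rw [hD, d_cast hm]; ring
  have haD : ((aLB m):ℝ) = D^2 := by rw [a_cast hm, hzD]; ring
  have hc3pos : 0 < (m:ℝ) ^ ((1:ℝ)/3) := Real.rpow_pos_of_pos hm0 _
  have hc3m : (m:ℝ) ^ ((1:ℝ)/3) * (m:ℝ) ^ ((2:ℝ)/3) = m := by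
    rw [← Real.rpow_add hm0]
    norm_num
  have h43 : (m:ℝ) ^ ((1:ℝ)/3) * (m:ℝ) = ((m:ℝ) ^ ((2:ℝ)/3))^2 := by
    have e1 : ((m:ℝ) ^ ((2:ℝ)/3))^2 = (m:ℝ)^((4:ℝ)/3) := by
      rw [← Real.rpow_natCast ((m:ℝ)^((2:ℝ)/3)) 2, ← Real.rpow_mul hm0.le]
      norm_num
    have e2 : (m:ℝ) ^ ((1:ℝ)/3) * (m:ℝ) = (m:ℝ)^((4:ℝ)/3) := by
      nth_rewrite 2 [show ((m:ℝ)) = (m:ℝ)^(1:ℝ) from (Real.rpow_one _).symm]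
      rw [← Real.rpow_add hm0]
      norm_num
    rw [e1, e2]
  have hc3_le_m : (m:ℝ) ^ ((1:ℝ)/3) ≤ (m:ℝ) := by
    calc (m:ℝ) ^ ((1:ℝ)/3) ≤ (m:ℝ) ^ (1:ℝ) :=
          Real.rpow_le_rpow_of_exponent_le (by linarith) (by norm_num)
      _ = m := Real.rpow_one _
  have hcD : (m:ℝ) ^ ((2:ℝ)/3) ≤ D := by rw [hD]; exact c_le_d hm
  have hDc : D ≤ (m:ℝ) ^ ((2:ℝ)/3) + 1 := by rw [hD]; exact d_le_c1 hm
  have hc0 : 0 ≤ (m:ℝ) ^ ((2:ℝ)/3) := Real.rpow_nonneg hm0.le _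
  set c3 : ℝ := (m:ℝ) ^ ((1:ℝ)/3) with hc3
  set c : ℝ := (m:ℝ) ^ ((2:ℝ)/3) with hc
  have hApos : 0 < D^2 + ((m:ℝ) - D) := by nlinarith
  have hAm : 0 < (D^2 + ((m:ℝ) - D))*m := mul_pos hApos hm0
  have key : c3 * (D^3 + ((m:ℝ)-D)*m) ≤ 4*((D^2+((m:ℝ)-D))*m) := by
    have e0 : c3 * m ≤ D^2 := by
      rw [h43]
      nlinarith
    have e1 : c3 * (((m:ℝ)-D)*m) ≤ ((m:ℝ)-D) * D^2 := by
      calc c3*(((m:ℝ)-D)*m) = ((m:ℝ)-D)*(c3*m) := by ring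
        _ ≤ ((m:ℝ)-D)*D^2 := mul_le_mul_of_nonneg_left e0 (by linarith)
    have e2 : c3 * D^3 ≤ 2*m*D^2 := by
      have h1 : c3 * D ≤ 2*m := by
        calc c3 * D ≤ c3 * (c + 1) := mul_le_mul_of_nonneg_left hDc hc3pos.le
          _ = m + c3 := by rw [mul_add, hc3m, mul_one]
          _ ≤ 2*m := by linarith
      calc c3 * D^3 = (c3*D)*D^2 := by ring
        _ ≤ (2*m)*D^2 := mul_le_mul_of_nonneg_right h1 (sq_nonneg D)
    nlinarith [mul_le_mul_of_nonneg_right (show ((m:ℝ)-D) ≤ m by linarith) (sq_nonneg D)]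
  rw [haD, hzD]
  have hident : 2 * (D^2/(D^2+((m:ℝ)-D))) * (((m:ℝ)-D)/m)
      = 2 - 2*(D^3 + ((m:ℝ)-D)*m)/((D^2+((m:ℝ)-D))*m) := by
    field_simp
    ring
  rw [hident]
  have h2 : 2*(D^3 + ((m:ℝ)-D)*m)/((D^2+((m:ℝ)-D))*m) ≤ 8/c3 := by
    rw [div_le_div_iff₀ hAm hc3pos]
    nlinarith [key]
  linarith

end
end PUaux

/-- For every `m ≥ 8`, on the profile `lbProfile m` the Piecewise
Uniform mechanism outputs `xLB m`, and the resulting ℓ1-loss equals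
`2·(a/(a+z))·(z/m) ≥ 2 - 8/m^(1/3)`. -/
theorem piecewise_uniform_many_projects (m : ℕ) (hm : 8 ≤ m) :
    IsPUOutcome (lbProfile m) (xLB m) ∧
    (∀ w : Fin m → ℝ, IsPUOutcome (lbProfile m) w → w = xLB m) ∧
    l1 (xLB m) (propDiv (lbProfile m)) =
      2 * ((aLB m : ℝ) / ((aLB m : ℝ) + (zLB m : ℝ))) * ((zLB m : ℝ) / (m : ℝ)) ∧
    2 - 8 / (m : ℝ) ^ ((1 : ℝ) / 3) ≤
      2 * ((aLB m : ℝ) / ((aLB m : ℝ) + (zLB m : ℝ))) * ((zLB m : ℝ) / (m : ℝ)) := by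
  refine ⟨?_, ?_, PUaux.loss_eq hm, PUaux.final_ineq hm⟩
  · refine ⟨PUaux.tstar m, PUaux.tstar_mem hm, ?_, fun j => (PUaux.median_eq hm j).symm⟩
    rw [Finset.sum_congr rfl (fun j _ => PUaux.median_eq hm j), PUaux.sum_xLB hm]
  · rintro w ⟨t, ht, hsum, hw⟩
    funext j
    rw [hw j]
    rcases le_total t (PUaux.tstar m) with hle | hge
    · have h := (Finset.sum_eq_sum_iff_of_le
        (f := fun j => phantomMedian (lbProfile m) (fun k => puPhantom m k t) j)
        (g := fun j => xLB m j)
        (fun i _ => PUaux.median_le hm ht.1 hle i)).mp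
        (by rw [hsum, PUaux.sum_xLB hm])
      exact h j (Finset.mem_univ j)
    · have h := (Finset.sum_eq_sum_iff_of_le
        (f := fun j => xLB m j)
        (g := fun j => phantomMedian (lbProfile m) (fun k => puPhantom m k t) j)
        (fun i _ => PUaux.median_ge hm hge ht.2 i)).mp
        (by rw [hsum, PUaux.sum_xLB hm])
      exact (h j (Finset.mem_univ j)).symm
end

section
/- For every m ≥ 8 there is a preference profile on which the Independent Markets mechanism has ℓ1-loss at least 2 − 8/m^{1/3}. Concretely, set z = ⌊m − m^{2/3}⌋ and a = (m − z)^2, and consider the profile with m voters over m projects where, for i = 1,…,z, voter i proposes the single-minded division with 1 on project i, and each of the remaining m − z voters proposes the division x with x_j = 1/(a+z) for j ≤ z and x_j = (m−z)/(a+z) for j > z; the Independent Markets mechanism outputs x on this profile (a feasible phantom parameter is t* = 1/(a+z)), and the resulting loss equals 2·(a/(a+z))·(z/m) ≥ 2 − 8/m^{1/3}. -/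
open Finset

section AuxLB
open Finset

lemma sorted_mono' {l : List ℝ} (hl : l.Pairwise (· ≤ ·)) :
    ∀ i j (_hi : i < l.length) (_hj : j < l.length), i ≤ j → l[i] ≤ l[j] := by
  intro i j hi hj hij
  rcases eq_or_lt_of_le hij with h | h
  · subst h; rfl
  · exact List.pairwise_iff_getElem.mp hl i j hi hj h

lemma sorted_getD_le_s16 {l : List ℝ} (hl : l.Pairwise (· ≤ ·)) {k : ℕ} (hk : k < l.length) {x : ℝ}
    (h : k + 1 ≤ l.countP (fun y => decide (y ≤ x))) : l.getD k 0 ≤ x := by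
  rw [List.getD_eq_getElem l 0 hk]
  by_contra hx
  push_neg at hx
  have hdrop : (l.drop k).countP (fun y => decide (y ≤ x)) = 0 := by
    rw [List.countP_eq_zero]
    intro y hy
    rw [List.mem_iff_getElem] at hy
    obtain ⟨i, hi, rfl⟩ := hy
    rw [List.getElem_drop]
    simp only [decide_eq_true_eq, not_le]
    have := sorted_mono' hl k (k + i) hk (by simp [List.length_drop] at hi; omega)
      (Nat.le_add_right _ _)
    linarith
  have htake : (l.take k).countP (fun y => decide (y ≤ x)) ≤ k := by
    calc (l.take k).countP (fun y => decide (y ≤ x)) ≤ (l.take k).length :=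
          List.countP_le_length
      _ ≤ k := by simp [List.length_take]
  have := List.countP_append (p := fun y => decide (y ≤ x)) (l₁ := l.take k) (l₂ := l.drop k)
  rw [List.take_append_drop] at this
  omega

lemma le_sorted_getD_s16 {l : List ℝ} (hl : l.Pairwise (· ≤ ·)) {k : ℕ} (hk : k < l.length) {x : ℝ}
    (h : l.countP (fun y => decide (y < x)) ≤ k) : x ≤ l.getD k 0 := by
  rw [List.getD_eq_getElem l 0 hk]
  by_contra hx
  push_neg at hx
  have htake : (l.take (k + 1)).countP (fun y => decide (y < x)) = (l.take (k + 1)).length := by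
    rw [List.countP_eq_length]
    intro y hy
    rw [List.mem_iff_getElem] at hy
    obtain ⟨i, hi, rfl⟩ := hy
    rw [List.getElem_take]
    simp only [decide_eq_true_eq]
    have hi' : i < k + 1 := by simp [List.length_take] at hi; omega
    have := sorted_mono' hl i k (by omega) hk (by omega)
    linarith
  have hlen : (l.take (k + 1)).length = k + 1 := by simp [List.length_take]; omega
  have := List.countP_append (p := fun y => decide (y < x)) (l₁ := l.take (k + 1)) (l₂ := l.drop (k + 1))
  rw [List.take_append_drop] at this
  omega

lemma countP_lt_getD {l : List ℝ} (hl : l.Pairwise (· ≤ ·)) {k : ℕ} (hk : k < l.length) :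
    l.countP (fun y => decide (y < l.getD k 0)) ≤ k := by
  rw [List.getD_eq_getElem l 0 hk]
  have hdrop : (l.drop k).countP (fun y => decide (y < l[k])) = 0 := by
    rw [List.countP_eq_zero]
    intro y hy
    rw [List.mem_iff_getElem] at hy
    obtain ⟨i, hi, rfl⟩ := hy
    rw [List.getElem_drop]
    simp only [decide_eq_true_eq, not_lt]
    exact sorted_mono' hl k (k + i) hk (by simp [List.length_drop] at hi; omega)
      (Nat.le_add_right _ _)
  have htake : (l.take k).countP (fun y => decide (y < l[k])) ≤ k := by
    calc (l.take k).countP _ ≤ (l.take k).length := List.countP_le_length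
      _ ≤ k := by simp [List.length_take]
  have := List.countP_append (p := fun y => decide (y < l[k])) (l₁ := l.take k) (l₂ := l.drop k)
  rw [List.take_append_drop] at this
  omega

lemma multiset_countP_sort (p : ℝ → Prop) [DecidablePred p] (s : Multiset ℝ) :
    Multiset.countP p s = (s.sort (· ≤ ·)).countP (fun y => decide (p y)) := by
  conv_lhs => rw [← Multiset.sort_eq s (· ≤ ·)]
  exact Multiset.coe_countP _ _

lemma medianAt_eq {s : Multiset ℝ} {k : ℕ} {x : ℝ} (hk : k < Multiset.card s)
    (h1 : Multiset.countP (fun y => y < x) s ≤ k)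
    (h2 : k + 1 ≤ Multiset.countP (fun y => y ≤ x) s) : medianAt s k = x := by
  have hlen : k < (s.sort (· ≤ ·)).length := by rwa [Multiset.length_sort]
  have hs := Multiset.pairwise_sort s (· ≤ ·)
  refine le_antisymm (sorted_getD_le_s16 hs hlen ?_) (le_sorted_getD_s16 hs hlen ?_)
  · rwa [multiset_countP_sort] at h2
  · rwa [multiset_countP_sort] at h1

lemma medianAt_mono {s s' : Multiset ℝ} {k : ℕ} (hk : k < Multiset.card s)
    (hk' : k < Multiset.card s')
    (hdom : ∀ x : ℝ, Multiset.countP (fun y => y < x) s' ≤ Multiset.countP (fun y => y < x) s) :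
    medianAt s k ≤ medianAt s' k := by
  have hlen : k < (s.sort (· ≤ ·)).length := by rwa [Multiset.length_sort]
  have hlen' : k < (s'.sort (· ≤ ·)).length := by rwa [Multiset.length_sort]
  apply le_sorted_getD_s16 (Multiset.pairwise_sort s' (· ≤ ·)) hlen'
  have h1 := countP_lt_getD (Multiset.pairwise_sort s (· ≤ ·)) hlen
  have h2 := hdom (medianAt s k)
  rw [multiset_countP_sort, multiset_countP_sort] at h2
  calc (s'.sort (· ≤ ·)).countP (fun y => decide (y < medianAt s k))
      ≤ (s.sort (· ≤ ·)).countP (fun y => decide (y < medianAt s k)) := h2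
    _ ≤ k := h1

lemma card_fin_filter {m : ℕ} (p : ℕ → Prop) [DecidablePred p] :
    ((univ : Finset (Fin m)).filter (fun i => p i.val)).card = ((range m).filter p).card := by
  apply Finset.card_bij (fun (i : Fin m) _ => i.val)
  · intro i hi
    simp only [Finset.mem_filter, Finset.mem_range, Finset.mem_univ, true_and] at hi ⊢
    exact ⟨i.isLt, hi⟩
  · intro i _ i' _ h
    exact Fin.val_injective h
  · intro k hk
    simp only [Finset.mem_filter, Finset.mem_range] at hk
    exact ⟨⟨k, hk.1⟩, by simp [Finset.mem_filter, hk.2], rfl⟩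

lemma range_filter_lt_card (c N : ℕ) : ((range N).filter (fun k => k < c)).card = min c N := by
  have : (range N).filter (fun k => k < c) = range (min c N) := by
    ext k
    simp only [Finset.mem_filter, Finset.mem_range, lt_min_iff]
    omega
  rw [this, Finset.card_range]

lemma countP_projValues_aux {n m : ℕ} (V : Fin n → Fin m → ℝ) (p : ℕ → ℝ) (j : Fin m)
    (q : ℝ → Prop) [DecidablePred q] :
    Multiset.countP q (projValues V p j) =
      (Finset.univ.filter (fun i => q (V i j))).card
        + ((Finset.range (n+1)).filter (fun k => q (p k))).card := by
  rw [projValues, Multiset.countP_add, Multiset.countP_map, Multiset.countP_map]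
  rw [← Finset.filter_val, ← Finset.filter_val]
  rfl

lemma card_projValues_aux {n m : ℕ} (V : Fin n → Fin m → ℝ) (p : ℕ → ℝ) (j : Fin m) :
    Multiset.card (projValues V p j) = 2 * n + 1 := by
  rw [projValues]
  simp
  omega

lemma phantomMedian_mono_aux {n m : ℕ} (V : Fin n → Fin m → ℝ) {p p' : ℕ → ℝ}
    (hpp : ∀ k, p k ≤ p' k) (j : Fin m) :
    phantomMedian V p j ≤ phantomMedian V p' j := by
  classical
  rw [phantomMedian, phantomMedian]
  apply medianAt_mono
  · rw [card_projValues_aux]; omega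
  · rw [card_projValues_aux]; omega
  · intro x
    rw [countP_projValues_aux, countP_projValues_aux]
    refine Nat.add_le_add_left (Finset.card_le_card ?_) _
    intro k hk
    simp only [Finset.mem_filter] at hk ⊢
    exact ⟨hk.1, lt_of_le_of_lt (hpp k) hk.2⟩

lemma lb_facts (m : ℕ) (hm : 8 ≤ m) :
    4 ≤ zLB m ∧ zLB m + 4 ≤ m ∧ m ≤ aLB m + zLB m ∧
      (zLB m : ℝ) ≤ (m:ℝ) - ((m:ℝ))^((2:ℝ)/3) ∧
      (m:ℝ) - ((m:ℝ))^((2:ℝ)/3) - 1 ≤ (zLB m : ℝ) := by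
  have hr8 : (8:ℝ) ≤ (m:ℝ) := by exact_mod_cast hm
  have hr0 : (0:ℝ) ≤ (m:ℝ) := by linarith
  set e : ℝ := (m:ℝ) ^ ((1:ℝ)/3) with hedef
  have he0 : 0 ≤ e := Real.rpow_nonneg hr0 _
  have he3 : e^3 = (m:ℝ) := by
    rw [hedef, ← Real.rpow_natCast ((m:ℝ) ^ ((1:ℝ)/3)) 3, ← Real.rpow_mul hr0]
    norm_num
  have he2 : (m:ℝ)^((2:ℝ)/3) = e^2 := by
    rw [hedef, ← Real.rpow_natCast ((m:ℝ) ^ ((1:ℝ)/3)) 2, ← Real.rpow_mul hr0]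
    norm_num
  have h2e : 2 ≤ e := by nlinarith [sq_nonneg (e-2), sq_nonneg (e+2), sq_nonneg e]
  have hx4 : (4:ℝ) ≤ (m:ℝ) - (m:ℝ)^((2:ℝ)/3) := by rw [he2]; nlinarith
  have hx0 : (0:ℝ) ≤ (m:ℝ) - (m:ℝ)^((2:ℝ)/3) := by linarith
  have hz4 : 4 ≤ zLB m := by
    rw [zLB]; exact Nat.le_floor (by exact_mod_cast hx4)
  have hzle : (zLB m : ℝ) ≤ (m:ℝ) - (m:ℝ)^((2:ℝ)/3) := by
    rw [zLB]; exact Nat.floor_le hx0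
  have hzge : (m:ℝ) - (m:ℝ)^((2:ℝ)/3) - 1 ≤ (zLB m : ℝ) := by
    have h := Nat.lt_floor_add_one ((m:ℝ) - (m:ℝ)^((2:ℝ)/3))
    rw [zLB]; linarith
  have hzm : zLB m + 4 ≤ m := by
    have h1 : (zLB m : ℝ) + 4 ≤ (m:ℝ) := by
      rw [he2] at hzle; nlinarith
    exact_mod_cast h1
  have hma : m ≤ aLB m + zLB m := by
    have h1 : m - zLB m ≤ (m - zLB m)^2 := Nat.le_self_pow two_ne_zero _
    rw [aLB]
    generalize (m - zLB m)^2 = q at h1 ⊢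
    omega
  exact ⟨hz4, hzm, hma, hzle, hzge⟩

lemma aLB_real (m : ℕ) (hzm : zLB m ≤ m) :
    (aLB m : ℝ) = ((m:ℝ) - (zLB m:ℝ))^2 := by
  rw [aLB, Nat.cast_pow, Nat.cast_sub hzm]

end AuxLB
section MedLB
open Finset

lemma card_fin_lt_of_le (m c : ℕ) (h : c ≤ m) :
    ((univ : Finset (Fin m)).filter (fun i : Fin m => (i:ℕ) < c)).card = c := by
  rw [card_fin_filter (m := m) (p := fun k => k < c), range_filter_lt_card]
  omega

lemma lb_med_eq (m : ℕ) (hm : 8 ≤ m) (j : Fin m) :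
    phantomMedian (lbProfile m)
      (fun k => min ((k : ℝ) * (1 / ((aLB m : ℝ) + (zLB m : ℝ)))) 1) j = xLB m j := by
  classical
  obtain ⟨hz4, hzm, hma, -, -⟩ := lb_facts m hm
  have hm8 : (8:ℝ) ≤ (m:ℝ) := by exact_mod_cast hm
  have hTm : (m:ℝ) ≤ (aLB m : ℝ) + (zLB m : ℝ) := by exact_mod_cast hma
  set Tr : ℝ := (aLB m : ℝ) + (zLB m : ℝ) with hTrdef
  have hTr1 : (1:ℝ) < Tr := by linarith
  have hTr0 : (0:ℝ) < Tr := by linarith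
  have h1T : (0:ℝ) < 1 / Tr := by positivity
  have h1T1 : 1 / Tr < 1 := by rw [div_lt_one hTr0]; exact hTr1
  have hphan : ∀ k ∈ range (m+1), min ((k:ℝ) * (1/Tr)) 1 = (k:ℝ) * (1/Tr) := by
    intro k hk
    apply min_eq_left
    rw [mul_one_div, div_le_one hTr0]
    have hkm : (k:ℝ) ≤ (m:ℝ) := by
      exact_mod_cast Nat.lt_succ_iff.mp (Finset.mem_range.mp hk)
    linarith
  rw [phantomMedian]
  by_cases hj : (j:ℕ) < zLB m
  · have hx : xLB m j = 1 / Tr := by rw [xLB, if_pos hj]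
    rw [hx]
    apply medianAt_eq (x := 1/Tr) (by rw [card_projValues_aux]; omega)
    · -- strict count ≤ m
      rw [countP_projValues_aux]
      have h1 : (univ.filter (fun i : Fin m => lbProfile m i j < 1/Tr)).card = zLB m - 1 := by
        have heq : univ.filter (fun i : Fin m => lbProfile m i j < 1/Tr)
            = univ.filter (fun i : Fin m => (i:ℕ) < zLB m ∧ (i:ℕ) ≠ (j:ℕ)) := by
          apply Finset.filter_congr
          intro i _
          rw [lbProfile]
          split_ifs with hi hji
          · refine iff_of_false (by linarith) ?_
            rintro ⟨-, hne⟩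
            exact hne (by rw [hji])
          · exact iff_of_true h1T ⟨hi, fun h => hji (Fin.val_injective h).symm⟩
          · rw [hx]
            exact iff_of_false (lt_irrefl _) (fun h => hi h.1)
        rw [heq, card_fin_filter (p := fun k => k < zLB m ∧ k ≠ (j:ℕ))]
        have heq2 : (range m).filter (fun k => k < zLB m ∧ k ≠ (j:ℕ))
            = (range (zLB m)).erase (j:ℕ) := by
          ext k
          simp only [Finset.mem_filter, Finset.mem_range, Finset.mem_erase]
          omega
        rw [heq2, Finset.card_erase_of_mem (by simp only [Finset.mem_range]; omega),
          Finset.card_range]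
      have h2 : ((range (m+1)).filter
          (fun k : ℕ => min ((k:ℝ) * (1/Tr)) 1 < 1/Tr)).card = 1 := by
        have heq : (range (m+1)).filter (fun k : ℕ => min ((k:ℝ) * (1/Tr)) 1 < 1/Tr)
            = (range (m+1)).filter (fun k : ℕ => k < 1) := by
          apply Finset.filter_congr
          intro k hk
          rw [hphan k hk, mul_one_div]
          rw [div_lt_div_iff_of_pos_right hTr0]
          constructor
          · intro h
            exact_mod_cast h
          · intro h
            exact_mod_cast h
        rw [heq, range_filter_lt_card]
        omega
      rw [h1, h2]
      omega
    · -- weak count ≥ m+1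
      rw [countP_projValues_aux]
      have h1 : (univ.filter (fun i : Fin m => lbProfile m i j ≤ 1/Tr)).card = m - 1 := by
        have heq : univ.filter (fun i : Fin m => lbProfile m i j ≤ 1/Tr)
            = univ.filter (fun i : Fin m => i ≠ j) := by
          apply Finset.filter_congr
          intro i _
          rw [lbProfile]
          split_ifs with hi hji
          · exact iff_of_false (by linarith) (by simp [hji.symm])
          · exact iff_of_true (by linarith) (fun h => hji (by rw [h]))
          · rw [hx]
            refine iff_of_true le_rfl (fun h => hi ?_)
            rw [h]; exact hj
        rw [heq, Finset.filter_ne', Finset.card_erase_of_mem (Finset.mem_univ j),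
          Finset.card_univ, Fintype.card_fin]
      have h2 : ((range (m+1)).filter
          (fun k : ℕ => min ((k:ℝ) * (1/Tr)) 1 ≤ 1/Tr)).card = 2 := by
        have heq : (range (m+1)).filter (fun k : ℕ => min ((k:ℝ) * (1/Tr)) 1 ≤ 1/Tr)
            = (range (m+1)).filter (fun k : ℕ => k < 2) := by
          apply Finset.filter_congr
          intro k hk
          rw [hphan k hk, mul_one_div]
          rw [div_le_div_iff_of_pos_right hTr0]
          constructor
          · intro h
            have : k ≤ 1 := by exact_mod_cast h
            omega
          · intro h
            have : (k:ℝ) ≤ 1 := by exact_mod_cast Nat.lt_succ_iff.mp h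
            exact this
        rw [heq, range_filter_lt_card]
        omega
      rw [h1, h2]
      omega
  · -- j ≥ z
    have hx : xLB m j = ((m:ℝ) - (zLB m:ℝ)) / Tr := by rw [xLB, if_neg hj]
    have hw4 : (4:ℝ) ≤ (m:ℝ) - (zLB m:ℝ) := by
      have : ((zLB m : ℕ):ℝ) + 4 ≤ (m:ℝ) := by exact_mod_cast hzm
      linarith
    have hx0 : 0 < ((m:ℝ) - (zLB m:ℝ)) / Tr := by positivity
    rw [hx]
    apply medianAt_eq (x := ((m:ℝ) - (zLB m:ℝ)) / Tr) (by rw [card_projValues_aux]; omega)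
    · rw [countP_projValues_aux]
      have h1 : (univ.filter
          (fun i : Fin m => lbProfile m i j < ((m:ℝ) - (zLB m:ℝ)) / Tr)).card = zLB m := by
        have heq : univ.filter (fun i : Fin m => lbProfile m i j < ((m:ℝ) - (zLB m:ℝ)) / Tr)
            = univ.filter (fun i : Fin m => (i:ℕ) < zLB m) := by
          apply Finset.filter_congr
          intro i _
          rw [lbProfile]
          split_ifs with hi hji
          · exfalso; apply hj; rw [hji]; exact hi
          · exact iff_of_true hx0 hi
          · rw [hx]
            exact iff_of_false (lt_irrefl _) hi
        rw [heq, card_fin_lt_of_le m (zLB m) (by omega)]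
      have h2 : ((range (m+1)).filter
          (fun k : ℕ => min ((k:ℝ) * (1/Tr)) 1 < ((m:ℝ) - (zLB m:ℝ)) / Tr)).card = m - zLB m := by
        have heq : (range (m+1)).filter
            (fun k : ℕ => min ((k:ℝ) * (1/Tr)) 1 < ((m:ℝ) - (zLB m:ℝ)) / Tr)
            = (range (m+1)).filter (fun k : ℕ => k < m - zLB m) := by
          apply Finset.filter_congr
          intro k hk
          rw [hphan k hk, mul_one_div, div_lt_div_iff_of_pos_right hTr0]
          have hcast : ((m - zLB m : ℕ):ℝ) = (m:ℝ) - (zLB m:ℝ) := by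
            rw [Nat.cast_sub (by omega)]
          rw [← hcast]
          exact ⟨fun h => by exact_mod_cast h, fun h => by exact_mod_cast h⟩
        rw [heq, range_filter_lt_card]
        omega
      rw [h1, h2]
      omega
    · rw [countP_projValues_aux]
      have h1 : (univ.filter
          (fun i : Fin m => lbProfile m i j ≤ ((m:ℝ) - (zLB m:ℝ)) / Tr)).card = m := by
        have heq : univ.filter (fun i : Fin m => lbProfile m i j ≤ ((m:ℝ) - (zLB m:ℝ)) / Tr)
            = univ := by
          rw [Finset.filter_eq_self]
          intro i _
          rw [lbProfile]
          split_ifs with hi hji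
          · exfalso; apply hj; rw [hji]; exact hi
          · linarith
          · rw [hx]
        rw [heq, Finset.card_univ, Fintype.card_fin]
      have h2 : ((range (m+1)).filter
          (fun k : ℕ => min ((k:ℝ) * (1/Tr)) 1 ≤ ((m:ℝ) - (zLB m:ℝ)) / Tr)).card
            = m - zLB m + 1 := by
        have heq : (range (m+1)).filter
            (fun k : ℕ => min ((k:ℝ) * (1/Tr)) 1 ≤ ((m:ℝ) - (zLB m:ℝ)) / Tr)
            = (range (m+1)).filter (fun k : ℕ => k < m - zLB m + 1) := by
          apply Finset.filter_congr
          intro k hk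
          rw [hphan k hk, mul_one_div, div_le_div_iff_of_pos_right hTr0]
          have hcast : ((m - zLB m : ℕ):ℝ) = (m:ℝ) - (zLB m:ℝ) := by
            rw [Nat.cast_sub (by omega)]
          rw [← hcast]
          constructor
          · intro h
            have : k ≤ m - zLB m := by exact_mod_cast h
            omega
          · intro h
            have : k ≤ m - zLB m := by omega
            exact_mod_cast this
        rw [heq, range_filter_lt_card]
        omega
      rw [h1, h2]
      omega

lemma sum_xLB (m : ℕ) (hm : 8 ≤ m) : ∑ j, xLB m j = 1 := by
  classical
  obtain ⟨hz4, hzm, hma, -, -⟩ := lb_facts m hm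
  have hm8 : (8:ℝ) ≤ (m:ℝ) := by exact_mod_cast hm
  have hTm : (m:ℝ) ≤ (aLB m : ℝ) + (zLB m : ℝ) := by exact_mod_cast hma
  have hTr0 : (0:ℝ) < (aLB m : ℝ) + (zLB m : ℝ) := by linarith
  have hcard1 := card_fin_lt_of_le m (zLB m) (by omega)
  have hcard2 : (univ.filter (fun j : Fin m => ¬ (j:ℕ) < zLB m)).card = m - zLB m := by
    rw [Finset.filter_not, Finset.card_sdiff_of_subset (Finset.filter_subset _ _), hcard1,
      Finset.card_univ, Fintype.card_fin]
  simp only [xLB]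
  rw [Finset.sum_ite, Finset.sum_const, Finset.sum_const, hcard1, hcard2]
  have haR := aLB_real m (by omega)
  have hcast : ((m - zLB m : ℕ):ℝ) = (m:ℝ) - (zLB m:ℝ) := by
    rw [Nat.cast_sub (by omega)]
  rw [nsmul_eq_mul, nsmul_eq_mul, hcast]
  rw [haR] at hTr0 ⊢
  field_simp
  ring

end MedLB
section FinalLB
open Finset

set_option maxHeartbeats 1600000 in
lemma l1_lb (m : ℕ) (hm : 8 ≤ m) :
    l1 (xLB m) (propDiv (lbProfile m)) =
      2 * ((aLB m : ℝ) / ((aLB m : ℝ) + (zLB m : ℝ))) * ((zLB m : ℝ) / (m : ℝ)) := by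
  classical
  obtain ⟨hz4, hzm, hma, -, -⟩ := lb_facts m hm
  have hm8 : (8:ℝ) ≤ (m:ℝ) := by exact_mod_cast hm
  have hm0 : (0:ℝ) < (m:ℝ) := by linarith
  have hTm : (m:ℝ) ≤ (aLB m : ℝ) + (zLB m : ℝ) := by exact_mod_cast hma
  have hTr0 : (0:ℝ) < (aLB m : ℝ) + (zLB m : ℝ) := by linarith
  have hcast : ((m - zLB m : ℕ):ℝ) = (m:ℝ) - (zLB m:ℝ) := by rw [Nat.cast_sub (by omega)]
  have haR := aLB_real m (by omega)
  have hw0 : (0:ℝ) ≤ (m:ℝ) - (zLB m:ℝ) := by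
    have : ((zLB m : ℕ):ℝ) ≤ (m:ℝ) := by exact_mod_cast (by omega : zLB m ≤ m)
    linarith
  have hcard1 := card_fin_lt_of_le m (zLB m) (by omega)
  have hcard2 : (univ.filter (fun j : Fin m => ¬ (j:ℕ) < zLB m)).card = m - zLB m := by
    rw [Finset.filter_not, Finset.card_sdiff_of_subset (Finset.filter_subset _ _), hcard1,
      Finset.card_univ, Fintype.card_fin]
  have hcol : ∀ j : Fin m, ∑ i, lbProfile m i j
      = (if (j:ℕ) < zLB m then 1 else 0) + ((m:ℝ) - (zLB m:ℝ)) * xLB m j := by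
    intro j
    simp only [lbProfile]
    rw [Finset.sum_ite, Finset.sum_ite_eq, Finset.sum_const, hcard2, nsmul_eq_mul, hcast]
    congr 1
    by_cases hj : (j:ℕ) < zLB m
    · rw [if_pos (by simp [Finset.mem_filter, hj]), if_pos hj]
    · rw [if_neg (by simp [Finset.mem_filter, hj]), if_neg hj]
  have habs : ∀ j : Fin m, |xLB m j - propDiv (lbProfile m) j| =
      if (j:ℕ) < zLB m then (aLB m:ℝ) / (((aLB m:ℝ) + (zLB m:ℝ)) * m)
      else ((m:ℝ) - (zLB m:ℝ)) * (zLB m:ℝ) / (((aLB m:ℝ) + (zLB m:ℝ)) * m) := by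
    intro j
    simp only [propDiv]
    rw [hcol j]
    by_cases hj : (j:ℕ) < zLB m
    · rw [if_pos hj, if_pos hj]
      simp only [xLB]
      rw [if_pos hj]
      have hval : 1 / ((aLB m:ℝ)+(zLB m:ℝ))
          - (1 + ((m:ℝ)-(zLB m:ℝ)) * (1/((aLB m:ℝ)+(zLB m:ℝ)))) / m
          = -((aLB m:ℝ) / (((aLB m:ℝ)+(zLB m:ℝ)) * m)) := by
        field_simp
        try ring
      rw [hval, abs_neg, abs_of_nonneg (by positivity)]
    · rw [if_neg hj, if_neg hj]
      simp only [xLB]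
      rw [if_neg hj]
      have hval : ((m:ℝ)-(zLB m:ℝ))/((aLB m:ℝ)+(zLB m:ℝ))
          - (0 + ((m:ℝ)-(zLB m:ℝ)) * (((m:ℝ)-(zLB m:ℝ))/((aLB m:ℝ)+(zLB m:ℝ)))) / m
          = ((m:ℝ)-(zLB m:ℝ)) * (zLB m:ℝ) / (((aLB m:ℝ)+(zLB m:ℝ)) * m) := by
        rw [haR]
        field_simp
        ring
      rw [hval, abs_of_nonneg
        (div_nonneg (mul_nonneg hw0 (Nat.cast_nonneg _)) (by positivity))]
  rw [l1]
  rw [Finset.sum_congr rfl (fun j _ => habs j)]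
  rw [Finset.sum_ite, Finset.sum_const, Finset.sum_const, hcard1, hcard2,
    nsmul_eq_mul, nsmul_eq_mul, hcast]
  rw [haR]
  field_simp
  ring

set_option maxHeartbeats 1600000 in
lemma lb_ineq (m : ℕ) (hm : 8 ≤ m) :
    2 - 8 / (m : ℝ) ^ ((1 : ℝ) / 3) ≤
      2 * ((aLB m : ℝ) / ((aLB m : ℝ) + (zLB m : ℝ))) * ((zLB m : ℝ) / (m : ℝ)) := by
  obtain ⟨hz4, hzm, hma, hzle, hzge⟩ := lb_facts m hm
  have hm8 : (8:ℝ) ≤ (m:ℝ) := by exact_mod_cast hm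
  have hm0 : (0:ℝ) < (m:ℝ) := by linarith
  have haR := aLB_real m (by omega)
  have hZm : (zLB m:ℝ) ≤ (m:ℝ) := by exact_mod_cast (by omega : zLB m ≤ m)
  have hZ0 : (0:ℝ) ≤ (zLB m:ℝ) := Nat.cast_nonneg _
  obtain ⟨e, hedef⟩ : ∃ e : ℝ, (m:ℝ) ^ ((1:ℝ)/3) = e := ⟨_, rfl⟩
  rw [hedef]
  have he0 : 0 ≤ e := hedef ▸ Real.rpow_nonneg (by linarith) _
  have he3 : e^3 = (m:ℝ) := by
    rw [← hedef, ← Real.rpow_natCast ((m:ℝ) ^ ((1:ℝ)/3)) 3, ← Real.rpow_mul (by linarith)]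
    norm_num
  have he2 : (m:ℝ)^((2:ℝ)/3) = e^2 := by
    rw [← hedef, ← Real.rpow_natCast ((m:ℝ) ^ ((1:ℝ)/3)) 2, ← Real.rpow_mul (by linarith)]
    norm_num
  have h2e : 2 ≤ e := by nlinarith [sq_nonneg (e-2), sq_nonneg (e+2), sq_nonneg e]
  have he0' : (0:ℝ) < e := by linarith
  rw [he2] at hzle hzge
  have hup : e^2 ≤ (m:ℝ) - (zLB m:ℝ) := by linarith
  have hA4 : e^4 ≤ (aLB m:ℝ) := by
    rw [haR]
    nlinarith [mul_le_mul hup hup (by positivity : (0:ℝ) ≤ e^2)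
      (by linarith : (0:ℝ) ≤ (m:ℝ) - (zLB m:ℝ))]
  have hkey : (zLB m:ℝ) * e ≤ (aLB m:ℝ) := by
    have h1 : (zLB m:ℝ) * e ≤ (m:ℝ) * e := mul_le_mul_of_nonneg_right hZm he0
    have h2 : (m:ℝ) * e = e^4 := by rw [← he3]; ring
    linarith
  have hAZ0 : (0:ℝ) < (aLB m:ℝ) + (zLB m:ℝ) := by nlinarith
  obtain ⟨u, hu⟩ : ∃ u : ℝ, 1 / e = u := ⟨_, rfl⟩
  have hu0 : 0 < u := by rw [← hu]; positivity
  have hue : e * u = 1 := by rw [← hu]; field_simp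
  have h1 : 1 - u ≤ (aLB m:ℝ) / ((aLB m:ℝ) + (zLB m:ℝ)) := by
    rw [le_div_iff₀ hAZ0]
    nlinarith [mul_le_mul_of_nonneg_right hkey hu0.le]
  have hue2 : u * e^3 = e^2 := by
    calc u * e^3 = (e*u)*e^2 := by ring
      _ = e^2 := by rw [hue]; ring
  have h2 : 1 - 2*u ≤ (zLB m:ℝ) / (m:ℝ) := by
    rw [le_div_iff₀ hm0, ← he3]
    nlinarith [hue2, hzge, he3, sq_nonneg (e-2)]
  have hX0 : 0 ≤ (aLB m:ℝ) / ((aLB m:ℝ) + (zLB m:ℝ)) := by positivity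
  have hprod : (1-u)*(1-2*u) ≤ ((aLB m:ℝ)/((aLB m:ℝ)+(zLB m:ℝ))) * ((zLB m:ℝ)/(m:ℝ)) := by
    have hu2 : u ≤ 1/2 := by
      rw [← hu, div_le_div_iff₀ he0' (by norm_num : (0:ℝ) < 2)]
      linarith
    exact mul_le_mul h1 h2 (by linarith) hX0
  have h8u : 8 / e = 8 * u := by rw [← hu]; ring
  rw [h8u]
  nlinarith [hprod, hu0.le, sq_nonneg u]

end FinalLB
/-- For every `m ≥ 8`, on the profile `lbProfile m` the Independent
Markets mechanism outputs `xLB m` (a feasible phantom parameter is `t* = 1/(a+z)`),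
and the resulting ℓ1-loss equals `2·(a/(a+z))·(z/m) ≥ 2 - 8/m^(1/3)`. -/
theorem independent_markets_many_projects (m : ℕ) (hm : 8 ≤ m) :
    ((∑ j, phantomMedian (lbProfile m)
        (fun k => min ((k : ℝ) * (1 / ((aLB m : ℝ) + (zLB m : ℝ)))) 1) j) = 1 ∧
      ∀ j, phantomMedian (lbProfile m)
          (fun k => min ((k : ℝ) * (1 / ((aLB m : ℝ) + (zLB m : ℝ)))) 1) j
        = xLB m j) ∧
    (∀ w : Fin m → ℝ, IsIMOutcome (lbProfile m) w → w = xLB m) ∧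
    l1 (xLB m) (propDiv (lbProfile m)) =
      2 * ((aLB m : ℝ) / ((aLB m : ℝ) + (zLB m : ℝ))) * ((zLB m : ℝ) / (m : ℝ)) ∧
    2 - 8 / (m : ℝ) ^ ((1 : ℝ) / 3) ≤
      2 * ((aLB m : ℝ) / ((aLB m : ℝ) + (zLB m : ℝ))) * ((zLB m : ℝ) / (m : ℝ)) := by
  have hmed := lb_med_eq m hm
  have hsum1 : (∑ j, phantomMedian (lbProfile m)
      (fun k => min ((k : ℝ) * (1 / ((aLB m : ℝ) + (zLB m : ℝ)))) 1) j) = 1 := by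
    rw [Finset.sum_congr rfl (fun j _ => hmed j)]
    exact sum_xLB m hm
  refine ⟨⟨hsum1, hmed⟩, ?_, l1_lb m hm, lb_ineq m hm⟩
  rintro w ⟨t, ht0, hsum, hw⟩
  obtain ⟨-, -, hma, -, -⟩ := lb_facts m hm
  have hm8 : (8:ℝ) ≤ (m:ℝ) := by exact_mod_cast hm
  have hTm : (m:ℝ) ≤ (aLB m : ℝ) + (zLB m : ℝ) := by exact_mod_cast hma
  have hTr0 : (0:ℝ) < (aLB m:ℝ) + (zLB m:ℝ) := by linarith
  funext j
  rw [hw j]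
  rcases le_total t (1 / ((aLB m:ℝ) + (zLB m:ℝ))) with hle | hle
  · have hmono : ∀ j' ∈ Finset.univ,
        phantomMedian (lbProfile m) (fun k => min ((k:ℝ)*t) 1) j'
          ≤ phantomMedian (lbProfile m)
              (fun k => min ((k:ℝ)*(1/((aLB m:ℝ)+(zLB m:ℝ)))) 1) j' := by
      intro j' _
      apply phantomMedian_mono_aux
      intro k
      exact min_le_min (mul_le_mul_of_nonneg_left hle (Nat.cast_nonneg k)) le_rfl
    have hsums : ∑ j', phantomMedian (lbProfile m) (fun k => min ((k:ℝ)*t) 1) j'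
        = ∑ j', phantomMedian (lbProfile m)
            (fun k => min ((k:ℝ)*(1/((aLB m:ℝ)+(zLB m:ℝ)))) 1) j' := by
      rw [hsum, hsum1]
    have := (Finset.sum_eq_sum_iff_of_le hmono).mp hsums j (Finset.mem_univ j)
    rw [this, hmed j]
  · have hmono : ∀ j' ∈ Finset.univ,
        phantomMedian (lbProfile m)
            (fun k => min ((k:ℝ)*(1/((aLB m:ℝ)+(zLB m:ℝ)))) 1) j'
          ≤ phantomMedian (lbProfile m) (fun k => min ((k:ℝ)*t) 1) j' := by
      intro j' _
      apply phantomMedian_mono_aux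
      intro k
      exact min_le_min (mul_le_mul_of_nonneg_left hle (Nat.cast_nonneg k)) le_rfl
    have hsums : ∑ j', phantomMedian (lbProfile m)
            (fun k => min ((k:ℝ)*(1/((aLB m:ℝ)+(zLB m:ℝ)))) 1) j'
        = ∑ j', phantomMedian (lbProfile m) (fun k => min ((k:ℝ)*t) 1) j' := by
      rw [hsum, hsum1]
    have := (Finset.sum_eq_sum_iff_of_le hmono).mp hsums j (Finset.mem_univ j)
    rw [← this, hmed j]
end
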